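/- arXiv:2401.00302 — 5 statements merged into one kernel-verified Lean document; each statement's English description precedes it below -/
import Mathlib

section
/- In the setting below, every copy C ∈ P(L) intersects κ-many summands: the set {α < κ : C ∩ L_α ≠ ∅} has cardinality κ. -/
open Ordinal Set Cardinal

/-- The set of copies of an ordinal `a`: subsets of the interval `[0, a)` that are
ranges of order-embeddings of `Iio a` into itself. -/
def Copies (a : Ordinal.{0}) : Set (Set Ordinal.{0}) :=
  {A | ∃ f : Set.Iio a ↪o Set.Iio a, A = Subtype.val '' Set.range ⇑f}

/-- Setting: `κ = cf(ω^δ)`, `⟨δ_α : α<κ⟩` a nondecreasing sequence of nonzero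
ordinals with `Σ_{α<κ} ω^{δ_α} = ω^δ`, realized by a partition of `[0, ω^δ)` into
consecutive intervals `L_α` of order type `ω^{δ_α}`. Then every copy `C` of `ω^δ`
meets `κ`-many summands `L_α`. -/
theorem stmt10 (δ : Ordinal.{0}) (hδ : 0 < δ) (κc : Cardinal.{0})
    (hκ : (ω ^ δ).cof = κc)
    (δf : Ordinal → Ordinal)
    (hpos : ∀ α < κc.ord, 0 < δf α)
    (hmono : ∀ α β : Ordinal, α ≤ β → β < κc.ord → δf α ≤ δf β)
    (Lset : Ordinal → Set Ordinal)
    (hconv : ∀ α < κc.ord, ∀ β < κc.ord, α < β →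
      ∀ x ∈ Lset α, ∀ y ∈ Lset β, x < y)
    (hiso : ∀ α < κc.ord, Nonempty (↥(Lset α) ≃o ↥(Set.Iio (ω ^ δf α))))
    (hunion : ⋃ α ∈ Set.Iio κc.ord, Lset α = Set.Iio (ω ^ δ))
    (C : Set Ordinal) (hC : C ∈ Copies (ω ^ δ)) :
    Cardinal.mk ↥{α : Ordinal | α < κc.ord ∧ (C ∩ Lset α).Nonempty} =
      Cardinal.lift.{1} κc := by
  obtain ⟨f, hCf⟩ := hC
  set S : Set Ordinal := {α : Ordinal | α < κc.ord ∧ (C ∩ Lset α).Nonempty} with hS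
  -- κc.ord.card = κc
  have hcard : κc.ord.card = κc := by rw [← hκ]; exact card_ord _
  have hcofcof : (κc.ord).cof = κc := by rw [← hκ]; exact cof_cof _
  -- cofinality claim
  have key : ∀ β < κc.ord, ∃ α ∈ S, β ≤ α := by
    intro β hβ
    obtain ⟨e⟩ := hiso β hβ
    have h0 : (0 : Ordinal) ∈ Set.Iio (ω ^ δf β) := opow_pos _ omega0_pos
    set y : Ordinal := (e.symm ⟨0, h0⟩ : ↥(Lset β)).val with hy
    have hyL : y ∈ Lset β := (e.symm ⟨0, h0⟩).2
    have hylt : y < ω ^ δ := by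
      have : y ∈ ⋃ α ∈ Set.Iio κc.ord, Lset α := Set.mem_biUnion hβ hyL
      rwa [hunion] at this
    set c : Ordinal := (f ⟨y, hylt⟩ : ↥(Set.Iio (ω ^ δ))).val with hc
    have hcC : c ∈ C := by
      rw [hCf]
      exact ⟨f ⟨y, hylt⟩, Set.mem_range_self _, rfl⟩
    have hyc : y ≤ c := f.strictMono.le_apply
    have hclt : c < ω ^ δ := (f ⟨y, hylt⟩).2
    have : c ∈ ⋃ α ∈ Set.Iio κc.ord, Lset α := by rw [hunion]; exact hclt
    obtain ⟨α, hα, hcα⟩ := Set.mem_iUnion₂.1 this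
    refine ⟨α, ⟨hα, c, hcC, hcα⟩, ?_⟩
    by_contra hba
    exact absurd (hconv α hα β hβ (lt_of_not_ge hba) c hcα y hyL) (not_lt.2 hyc)
  -- upper bound
  have hub : Cardinal.mk ↥S ≤ Cardinal.lift.{1} κc := by
    have h1 : S ⊆ Set.Iio κc.ord := fun α hα => hα.1
    calc Cardinal.mk ↥S ≤ Cardinal.mk ↥(Set.Iio κc.ord) := mk_le_mk_of_subset h1
      _ = Cardinal.lift.{1} κc := by rw [Cardinal.mk_Iio_ordinal, hcard]
  -- lower bound
  have hlb : Cardinal.lift.{1} κc ≤ Cardinal.mk ↥S := by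
    set e := Ordinal.ToType.mk (o := κc.ord)
    set S' : Set (κc.ord).ToType := {b | ((e.symm b : ↥(Set.Iio κc.ord)) : Ordinal) ∈ S}
    have hUnb : Set.Unbounded (· < ·) S' := by
      rw [Set.unbounded_lt_iff]
      intro b
      obtain ⟨α, hαS, hba⟩ := key ((e.symm b : ↥(Set.Iio κc.ord)) : Ordinal) (e.symm b).2
      refine ⟨e ⟨α, hαS.1⟩, ?_, ?_⟩
      · show ((e.symm (e ⟨α, hαS.1⟩) : ↥(Set.Iio κc.ord)) : Ordinal) ∈ S
        rw [e.symm_apply_apply]; exact hαS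
      · calc b = e (e.symm b) := (e.apply_symm_apply b).symm
          _ ≤ e ⟨α, hαS.1⟩ := e.le_iff_le.2 (by exact_mod_cast hba)
    have h1 : κc ≤ Cardinal.mk ↥S' := by
      have := Order.cof_le (s := S') (fun a => (hUnb a).imp fun b hb => ⟨hb.1, not_lt.1 hb.2⟩)
      rwa [Ordinal.cof_toType, hcofcof] at this
    have h2 : Cardinal.lift.{1} (Cardinal.mk ↥S') ≤ Cardinal.mk ↥S := by
      have hemb : ↥S' ↪ ↥S := by
        refine ⟨fun x => ⟨((e.symm x.1 : ↥(Set.Iio κc.ord)) : Ordinal), x.2⟩, ?_⟩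
        intro a b hab
        simp only [Subtype.mk.injEq] at hab
        exact Subtype.ext (e.symm.injective (Subtype.ext hab))
      have := Cardinal.lift_mk_le'.{0,1}.2 ⟨hemb⟩
      simpa using this
    calc Cardinal.lift.{1} κc ≤ Cardinal.lift.{1} (Cardinal.mk ↥S') := Cardinal.lift_le.2 h1
      _ ≤ Cardinal.mk ↥S := h2
  exact le_antisymm hub hlb
end

section
/- In the setting below, a subset C ⊆ L is a copy of L (C ∈ P(L)) if and only if for all α, η < κ there is a set K ⊆ κ ∖ η with |K| < κ such that L_α order-embeds into the suborder (⋃_{β∈K} L_β) ∩ C of L. -/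
open Ordinal Set Cardinal

/-- sup of a small set of small ordinals below a regular cardinal stays below its `ord`. -/
lemma aux_sSup_lt {c : Cardinal.{0}} (hc : c.IsRegular) {K : Set Ordinal.{0}}
    (hK : #↥K < Cardinal.lift.{1} c) (h2 : K ⊆ Set.Iio c.ord) : sSup K < c.ord := by
  obtain ⟨c', hc'lt, hc'eq⟩ := Cardinal.lt_lift_iff.mp hK
  obtain ⟨e⟩ : Nonempty (c'.out ≃ ↥K) := by
    rw [← Cardinal.lift_mk_eq']
    simp [Cardinal.mk_out, hc'eq]
  have hKr : K = Set.range (fun i => (e i).1) := by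
    ext z
    constructor
    · intro hz; exact ⟨e.symm ⟨z, hz⟩, by simp⟩
    · rintro ⟨i, rfl⟩; exact (e i).2
  rw [hKr]
  have hre : sSup (Set.range fun i => (e i).1) = ⨆ i, (e i).1 := rfl
  rw [hre]
  refine Ordinal.iSup_lt_ord ?_ fun i => h2 (e i).2
  rw [Cardinal.mk_out]
  exact hc'lt.trans_le hc.cof_eq.ge

/-- An order embedding between initial intervals of ordinals bounds the ordinals. -/
lemma aux_emb_le {a b : Ordinal.{0}} (h : Nonempty (↥(Set.Iio a) ↪o ↥(Set.Iio b))) : a ≤ b := by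
  by_contra hba
  push_neg at hba
  obtain ⟨f⟩ := h
  have hg : StrictMono (fun x : Set.Iio a => (⟨(f x).1, (f x).2.trans hba⟩ : Set.Iio a)) := by
    intro x y hxy
    exact Subtype.mk_lt_mk.2 (f.strictMono hxy)
  have h1 := hg.le_apply (x := ⟨b, hba⟩)
  exact absurd (f ⟨b, hba⟩).2 (not_lt.2 h1)

/-- A subset of `Iio a` is a copy of `a` iff `Iio a` order-embeds into it. -/
lemma aux_copy_iff {a : Ordinal.{0}} {C : Set Ordinal.{0}} (hC : C ⊆ Set.Iio a) :
    C ∈ Copies a ↔ Nonempty (↥(Set.Iio a) ↪o ↥C) := by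
  constructor
  · rintro ⟨f, rfl⟩
    exact ⟨OrderEmbedding.ofStrictMono
      (fun x => ⟨(f x).1, ⟨f x, Set.mem_range_self x, rfl⟩⟩)
      (fun x y h => Subtype.mk_lt_mk.2 (f.strictMono h))⟩
  · rintro ⟨E⟩
    have incl : ↥C ↪o ↥(Set.Iio a) :=
      OrderEmbedding.ofStrictMono (fun c => ⟨c.1, hC c.2⟩) (fun x y h => Subtype.mk_lt_mk.2 h)
    have h1 : Ordinal.type ((· < ·) : ↥(Set.Iio a) → ↥(Set.Iio a) → Prop)
        ≤ Ordinal.type ((· < ·) : ↥C → ↥C → Prop) := Ordinal.type_le_iff'.2 ⟨E.ltEmbedding⟩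
    have h2 : Ordinal.type ((· < ·) : ↥C → ↥C → Prop)
        ≤ Ordinal.type ((· < ·) : ↥(Set.Iio a) → ↥(Set.Iio a) → Prop) :=
      Ordinal.type_le_iff'.2 ⟨incl.ltEmbedding⟩
    obtain ⟨g⟩ := Ordinal.type_eq.1 (le_antisymm h1 h2)
    let e : ↥(Set.Iio a) ≃o ↥C := OrderIso.ofRelIsoLT g
    refine ⟨OrderEmbedding.ofStrictMono (fun x => ⟨(e x).1, hC (e x).2⟩)
      (fun x y h => Subtype.mk_lt_mk.2 (Subtype.coe_lt_coe.2 (e.strictMono h))), ?_⟩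
    ext c
    simp only [Set.mem_image, Set.mem_range, OrderEmbedding.coe_ofStrictMono]
    constructor
    · intro hc
      exact ⟨⟨c, hC hc⟩, ⟨e.symm ⟨c, hc⟩, Subtype.ext (show (e (e.symm ⟨c, hc⟩)).1 = c from congrArg Subtype.val (e.apply_symm_apply ⟨c, hc⟩))⟩, rfl⟩
    · rintro ⟨x, ⟨y, rfl⟩, rfl⟩
      exact (e y).2

/-- Glue embeddings along stacked families. -/
lemma aux_glue {I : Set Ordinal.{0}} {A B : Ordinal → Set Ordinal.{0}}
    (hA : ∀ i ∈ I, ∀ j ∈ I, i < j → ∀ x ∈ A i, ∀ y ∈ A j, x < y)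
    (hB : ∀ i ∈ I, ∀ j ∈ I, i < j → ∀ x ∈ B i, ∀ y ∈ B j, x < y)
    (g : ∀ i ∈ I, ↥(A i) ↪o ↥(B i)) :
    Nonempty (↥(⋃ i ∈ I, A i) ↪o ↥(⋃ i ∈ I, B i)) := by
  classical
  have pick : ∀ x : ↥(⋃ i ∈ I, A i), ∃ i, i ∈ I ∧ x.1 ∈ A i := by
    intro x
    simpa using Set.mem_iUnion₂.1 x.2
  choose idx hI hA' using pick
  refine ⟨OrderEmbedding.ofStrictMono
    (fun x => ⟨(g (idx x) (hI x) ⟨x.1, hA' x⟩).1,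
      Set.mem_iUnion₂.2 ⟨idx x, hI x, (g (idx x) (hI x) ⟨x.1, hA' x⟩).2⟩⟩) ?_⟩
  intro x y hxy
  have hxy' : x.1 < y.1 := hxy
  rcases lt_trichotomy (idx x) (idx y) with h | h | h
  · exact Subtype.mk_lt_mk.2 (hB _ (hI x) _ (hI y) h _
      (g (idx x) (hI x) ⟨x.1, hA' x⟩).2 _ (g (idx y) (hI y) ⟨y.1, hA' y⟩).2)
  · have key : ∀ i j (hi : i ∈ I) (hj : j ∈ I) (hx : x.1 ∈ A i) (hy : y.1 ∈ A j),
        i = j → (g i hi ⟨x.1, hx⟩).1 < (g j hj ⟨y.1, hy⟩).1 := by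
      rintro i j hi hj hx hy rfl
      exact Subtype.coe_lt_coe.2 ((g i hi).strictMono (Subtype.mk_lt_mk.2 hxy'))
    exact Subtype.mk_lt_mk.2 (key _ _ _ _ _ _ h)
  · exact absurd (hA _ (hI y) _ (hI x) h _ (hA' y) _ (hA' x)) (not_lt.2 hxy'.le)

/-- Setting: `κ = cf(ω^δ)`, `⟨δ_α : α<κ⟩` a nondecreasing sequence of nonzero
ordinals with `Σ_{α<κ} ω^{δ_α} = ω^δ`, realized by a partition of `[0, ω^δ)` into
consecutive intervals `L_α` of order type `ω^{δ_α}`. Then `C ⊆ L` is a copy of `L`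
iff for all `α, η < κ` there is `K ⊆ κ ∖ η` with `|K| < κ` such that `L_α`
order-embeds into `(⋃_{β∈K} L_β) ∩ C`. -/
theorem stmt11 (δ : Ordinal.{0}) (hδ : 0 < δ) (κc : Cardinal.{0})
    (hκ : (ω ^ δ).cof = κc)
    (δf : Ordinal → Ordinal)
    (hpos : ∀ α < κc.ord, 0 < δf α)
    (hmono : ∀ α β : Ordinal, α ≤ β → β < κc.ord → δf α ≤ δf β)
    (Lset : Ordinal → Set Ordinal)
    (hconv : ∀ α < κc.ord, ∀ β < κc.ord, α < β →
      ∀ x ∈ Lset α, ∀ y ∈ Lset β, x < y)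
    (hiso : ∀ α < κc.ord, Nonempty (↥(Lset α) ≃o ↥(Set.Iio (ω ^ δf α))))
    (hunion : ⋃ α ∈ Set.Iio κc.ord, Lset α = Set.Iio (ω ^ δ))
    (C : Set Ordinal) (hCsub : C ⊆ Set.Iio (ω ^ δ)) :
    C ∈ Copies (ω ^ δ) ↔
      ∀ α < κc.ord, ∀ η < κc.ord, ∃ K : Set Ordinal,
        K ⊆ Set.Iio κc.ord \ Set.Iio η ∧
        Cardinal.mk ↥K < Cardinal.lift.{1} κc ∧
        Nonempty (↥(Lset α) ↪o ↥((⋃ β ∈ K, Lset β) ∩ C)) := by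
  classical
  have hlim : Order.IsSuccLimit (ω ^ δ) := isSuccLimit_opow_left isSuccLimit_omega0 hδ.ne'
  have hreg : κc.IsRegular := hκ ▸ Cardinal.isRegular_cof hlim
  have hordlim : Order.IsSuccLimit κc.ord := Cardinal.isSuccLimit_ord hreg.1
  have hLne : ∀ α < κc.ord, (Lset α).Nonempty := by
    intro α hα
    obtain ⟨e⟩ := hiso α hα
    exact ⟨(e.symm ⟨0, Ordinal.opow_pos _ omega0_pos⟩).1, (e.symm _).2⟩
  have hLsub : ∀ α < κc.ord, Lset α ⊆ Set.Iio (ω ^ δ) := by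
    intro α hα x hx
    rw [← hunion]; exact Set.mem_iUnion₂.2 ⟨α, hα, hx⟩
  rw [aux_copy_iff hCsub]
  constructor
  · rintro ⟨E⟩ α hα η hη
    have hfle : ∀ x : ↥(Set.Iio (ω ^ δ)), x.1 ≤ (E x).1 := by
      have hg : StrictMono (fun x : Set.Iio (ω ^ δ) =>
          (⟨(E x).1, hCsub (E x).2⟩ : Set.Iio (ω ^ δ))) :=
        fun x y h => Subtype.mk_lt_mk.2 (Subtype.coe_lt_coe.2 (E.strictMono h))
      intro x
      exact Subtype.coe_le_coe.2 (hg.le_apply (x := x))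
    obtain ⟨y0, hy0⟩ := hLne η hη
    have hy0lt : y0 < ω ^ δ := hLsub η hη hy0
    have hα1 : α + 1 < κc.ord := by
      rw [Ordinal.add_one_eq_succ]; exact hordlim.succ_lt hα
    obtain ⟨y1, hy1⟩ := hLne _ hα1
    have hy1lt : y1 < ω ^ δ := hLsub _ hα1 hy1
    have hαsucc : α < α + 1 := by
      rw [Ordinal.add_one_eq_succ]; exact Order.lt_succ α
    have hLy1 : Lset α ⊆ Set.Iio y1 := fun x hx => hconv α hα _ hα1 hαsucc x hx y1 hy1
    have hadd : ∀ x : Ordinal, x ≤ y1 → y0 + x < ω ^ δ := fun x hx =>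
      principal_add_omega0_opow δ hy0lt (lt_of_le_of_lt hx hy1lt)
    set b := (E ⟨y0 + y1, hadd _ le_rfl⟩).1 with hbdef
    have hbC : b ∈ C := (E _).2
    have hbδ : b < ω ^ δ := hCsub hbC
    have hbmem : b ∈ ⋃ α ∈ Set.Iio κc.ord, Lset α := by rw [hunion]; exact hbδ
    obtain ⟨γ, hγ, hbγ⟩ := Set.mem_iUnion₂.1 hbmem
    refine ⟨Set.Icc η γ, ?_, ?_, ?_⟩
    · rintro x ⟨h1, h2⟩
      exact ⟨h2.trans_lt hγ, not_lt.2 h1⟩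
    · have hsucc : γ + 1 < κc.ord := by
        rw [Ordinal.add_one_eq_succ]; exact hordlim.succ_lt hγ
      calc #↥(Set.Icc η γ) ≤ #↥(Set.Iio (γ + 1)) := by
            apply Cardinal.mk_le_mk_of_subset
            intro x hx
            have hxlt : x < γ + 1 := by
              rw [Ordinal.add_one_eq_succ]
              exact (Order.lt_succ_iff_of_not_isMax (not_isMax γ)).2 hx.2
            exact hxlt
        _ = Cardinal.lift.{1} (γ + 1).card := Ordinal.mk_Iio_ordinal _
        _ < Cardinal.lift.{1} κc := Cardinal.lift_lt.2 (Cardinal.lt_ord.1 hsucc)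
    · have hmem : ∀ z : ↥(Lset α),
          (E ⟨y0 + z.1, hadd _ (hLy1 z.2).le⟩).1 ∈ (⋃ β ∈ Set.Icc η γ, Lset β) ∩ C := by
        intro z
        have hvC : (E ⟨y0 + z.1, hadd _ (hLy1 z.2).le⟩).1 ∈ C := (E _).2
        have hvδ : (E ⟨y0 + z.1, hadd _ (hLy1 z.2).le⟩).1 < ω ^ δ := hCsub hvC
        have hvmem : (E ⟨y0 + z.1, hadd _ (hLy1 z.2).le⟩).1 ∈ ⋃ α ∈ Set.Iio κc.ord, Lset α := by
          rw [hunion]; exact hvδ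
        obtain ⟨β, hβ, hvβ⟩ := Set.mem_iUnion₂.1 hvmem
        have hy0v : y0 ≤ (E ⟨y0 + z.1, hadd _ (hLy1 z.2).le⟩).1 :=
          le_trans (le_self_add (a := y0) (b := z.1)) (hfle _)
        have hvb : (E ⟨y0 + z.1, hadd _ (hLy1 z.2).le⟩).1 < b := by
          rw [hbdef]
          exact Subtype.coe_lt_coe.2 (E.strictMono (Subtype.mk_lt_mk.2
            ((add_lt_add_iff_left y0).2 (hLy1 z.2))))
        have hηβ : η ≤ β := by
          by_contra hc; push_neg at hc
          exact absurd (hconv β hβ η hη hc _ hvβ y0 hy0) (not_lt.2 hy0v)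
        have hβγ : β ≤ γ := by
          by_contra hc; push_neg at hc
          exact absurd (hconv γ hγ β hβ hc b hbγ _ hvβ) (not_lt.2 hvb.le)
        exact ⟨Set.mem_iUnion₂.2 ⟨β, ⟨hηβ, hβγ⟩, hvβ⟩, hvC⟩
      refine ⟨OrderEmbedding.ofStrictMono
        (fun x => ⟨(E ⟨y0 + x.1, hadd _ (hLy1 x.2).le⟩).1, hmem x⟩) ?_⟩
      intro x y h
      exact Subtype.mk_lt_mk.2 (Subtype.coe_lt_coe.2 (E.strictMono (Subtype.mk_lt_mk.2
        ((add_lt_add_iff_left y0).2 h))))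
  · intro H
    set Kf : Ordinal → Ordinal → Set Ordinal := fun α η =>
      if h : α < κc.ord ∧ η < κc.ord then (H α h.1 η h.2).choose else ∅ with hKfdef
    have hKspec : ∀ α η, α < κc.ord → η < κc.ord →
        Kf α η ⊆ Set.Iio κc.ord \ Set.Iio η ∧ #↥(Kf α η) < Cardinal.lift.{1} κc ∧
        Nonempty (↥(Lset α) ↪o ↥((⋃ β ∈ Kf α η, Lset β) ∩ C)) := by
      intro α η hα hη
      have hKeq : Kf α η = (H α hα η hη).choose := by
        simp only [hKfdef]
        rw [dif_pos (show α < κc.ord ∧ η < κc.ord from ⟨hα, hη⟩)]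
      rw [hKeq]
      exact (H α hα η hη).choose_spec
    set bnd : Ordinal → Ordinal → Ordinal := fun α η => sSup (Kf α η) + 1 with hbnddef
    have hbnd_lt : ∀ α η, α < κc.ord → η < κc.ord → bnd α η < κc.ord := by
      intro α η hα hη
      have h1 : sSup (Kf α η) < κc.ord := aux_sSup_lt hreg (hKspec α η hα hη).2.1
        (fun x hx => ((hKspec α η hα hη).1 hx).1)
      show sSup (Kf α η) + 1 < κc.ord
      rw [Ordinal.add_one_eq_succ]
      exact hordlim.succ_lt h1
    have hbnd_le_ord : ∀ α η, bnd α η ≤ κc.ord := by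
      intro α η
      by_cases h : α < κc.ord ∧ η < κc.ord
      · exact (hbnd_lt α η h.1 h.2).le
      · show sSup (Kf α η) + 1 ≤ κc.ord
        rw [hKfdef]
        simp only [dif_neg h]
        rw [csSup_empty]
        show (⊥ : Ordinal) + 1 ≤ κc.ord
        rw [Ordinal.bot_eq_zero, zero_add]
        exact Order.one_le_iff_pos.2 hordlim.pos
    set eta : Ordinal → Ordinal := WellFounded.fix Ordinal.lt_wf
      (fun α ih => sSup (Set.range fun b : ↥(Set.Iio α) => bnd b.1 (ih b.1 b.2))) with hetadef
    have eta_eq : ∀ α, eta α = sSup (Set.range fun b : ↥(Set.Iio α) => bnd b.1 (eta b.1)) := by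
      intro α
      rw [hetadef]
      exact WellFounded.fix_eq _ _ _
    have heta_lt : ∀ α, α < κc.ord → eta α < κc.ord := by
      intro α
      induction α using Ordinal.induction with
      | h α IH =>
        intro hα
        rw [eta_eq]
        apply aux_sSup_lt hreg
        · refine lt_of_le_of_lt Cardinal.mk_range_le ?_
          rw [Ordinal.mk_Iio_ordinal]
          exact Cardinal.lift_lt.2 (Cardinal.lt_ord.1 hα)
        · rintro x ⟨b, rfl⟩
          exact hbnd_lt b.1 (eta b.1) (b.2.trans hα) (IH b.1 b.2 (b.2.trans hα))
    have heta_ge : ∀ β α : Ordinal, β < α → bnd β (eta β) ≤ eta α := by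
      intro β α hβα
      rw [eta_eq α]
      apply le_csSup
      · exact ⟨κc.ord, by rintro x ⟨b, rfl⟩; exact hbnd_le_ord _ _⟩
      · exact ⟨⟨β, hβα⟩, rfl⟩
    set B : Ordinal → Set Ordinal := fun α => (⋃ β ∈ Kf α (eta α), Lset β) ∩ C with hBdef
    have hKsub : ∀ α, α < κc.ord → Kf α (eta α) ⊆ Set.Iio κc.ord \ Set.Iio (eta α) :=
      fun α hα => (hKspec α (eta α) hα (heta_lt α hα)).1
    have hBst : ∀ i ∈ Set.Iio κc.ord, ∀ j ∈ Set.Iio κc.ord, i < j →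
        ∀ x ∈ B i, ∀ y ∈ B j, x < y := by
      intro i hi j hj hij x hx y hy
      obtain ⟨hx1, -⟩ := hx
      obtain ⟨hy1, -⟩ := hy
      obtain ⟨β, hβK, hxβ⟩ := Set.mem_iUnion₂.1 hx1
      obtain ⟨β', hβ'K, hyβ'⟩ := Set.mem_iUnion₂.1 hy1
      have hββ' : β < β' := by
        have h1 : β ≤ sSup (Kf i (eta i)) :=
          le_csSup ⟨κc.ord, fun z hz => (hKsub i hi hz).1.le⟩ hβK
        have h2 : sSup (Kf i (eta i)) < bnd i (eta i) := by
          show sSup (Kf i (eta i)) < sSup (Kf i (eta i)) + 1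
          rw [Ordinal.add_one_eq_succ]
          exact Order.lt_succ _
        have h3 : bnd i (eta i) ≤ eta j := heta_ge i j hij
        have h4 : eta j ≤ β' := not_lt.1 (hKsub j hj hβ'K).2
        exact lt_of_le_of_lt h1 (lt_of_lt_of_le h2 (h3.trans h4))
      exact hconv β (hKsub i hi hβK).1 β' (hKsub j hj hβ'K).1 hββ' x hxβ y hyβ'
    have hg : ∀ i ∈ Set.Iio κc.ord, ↥(Lset i) ↪o ↥(B i) := fun i hi =>
      Classical.choice (hKspec i (eta i) hi (heta_lt i hi)).2.2
    obtain ⟨E0⟩ := aux_glue (I := Set.Iio κc.ord) (A := Lset) (B := B)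
      (fun i hi j hj hij => hconv i hi j hj hij) hBst hg
    rw [hunion] at E0
    have hsubC : (⋃ i ∈ Set.Iio κc.ord, B i) ⊆ C := by
      intro x hx
      obtain ⟨i, hi, hxB⟩ := Set.mem_iUnion₂.1 hx
      exact hxB.2
    exact ⟨E0.trans (OrderEmbedding.ofStrictMono (fun x => ⟨x.1, hsubC x.2⟩)
      (fun x y h => Subtype.mk_lt_mk.2 h))⟩
end

section
/- In the setting below, assume in addition that cf(ω^{δ_α}) ≥ κ for all α < κ. Then a subset C ⊆ L is a copy of L (C ∈ P(L)) if and only if for every α < κ the set S^α_C := {β < κ : ω^{δ_α} order-embeds into the suborder L_β ∩ C} has cardinality κ. -/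
open Ordinal Set Cardinal

/-! ### Auxiliary API: order types of sets of ordinals -/

/-- The order type of a set of ordinals (as an `Ordinal.{1}`). -/
noncomputable def OT (s : Set Ordinal.{0}) : Ordinal.{1} :=
  Ordinal.type ((· < ·) : s → s → Prop)

theorem OT_Iio (a : Ordinal.{0}) : OT (Set.Iio a) = Ordinal.lift.{1} a := typein_ordinal a

theorem OT_mono {s t : Set Ordinal.{0}} (h : s ⊆ t) : OT s ≤ OT t := by
  rw [OT, OT, Ordinal.type_le_iff']
  exact ⟨⟨⟨Set.inclusion h, Set.inclusion_injective h⟩, Iff.rfl⟩⟩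

theorem OT_le_of_emb {s t : Set Ordinal.{0}} (f : ↥s ↪o ↥t) : OT s ≤ OT t := by
  rw [OT, OT, Ordinal.type_le_iff']
  exact ⟨f.ltEmbedding⟩

theorem emb_of_OT_le {s t : Set Ordinal.{0}} (h : OT s ≤ OT t) : Nonempty (↥s ↪o ↥t) := by
  rw [OT, OT, Ordinal.type_le_iff'] at h
  exact ⟨RelEmbedding.orderEmbeddingOfLTEmbedding h.some⟩

theorem iso_of_OT_eq {s t : Set Ordinal.{0}} (h : OT s = OT t) : Nonempty (↥s ≃o ↥t) := by
  rw [OT, OT, Ordinal.type_eq] at h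
  exact ⟨OrderIso.ofRelIsoLT h.some⟩

theorem OT_eq_of_iso {s t : Set Ordinal.{0}} (e : ↥s ≃o ↥t) : OT s = OT t :=
  Ordinal.type_eq.2 ⟨e.toRelIsoLT⟩

theorem OT_rank_eq {s : Set Ordinal.{0}} {x : Ordinal} (hx : x ∈ s) :
    OT (s ∩ Set.Iio x) = Ordinal.typein ((· < ·) : s → s → Prop) ⟨x, hx⟩ := by
  rw [Ordinal.typein, OT]
  apply Ordinal.type_eq.2
  exact ⟨⟨⟨fun y => ⟨⟨y.1, y.2.1⟩, y.2.2⟩, fun b => ⟨b.1.1, b.1.2, b.2⟩,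
    fun y => rfl, fun b => rfl⟩, Iff.rfl⟩⟩

theorem rank_lt {s : Set Ordinal.{0}} {x : Ordinal} (hx : x ∈ s) :
    OT (s ∩ Set.Iio x) < OT s := by
  rw [OT_rank_eq hx]; exact Ordinal.typein_lt_type _ _

theorem rank_surj {s : Set Ordinal.{0}} {z : Ordinal.{1}} (hz : z < OT s) :
    ∃ x ∈ s, OT (s ∩ Set.Iio x) = z := by
  obtain ⟨⟨x, hx⟩, h⟩ := Ordinal.typein_surj ((· < ·) : s → s → Prop) hz
  exact ⟨x, hx, (OT_rank_eq hx).trans h⟩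

theorem OT_le_of_rank_lt {s : Set Ordinal.{0}} {z : Ordinal.{1}}
    (h : ∀ x ∈ s, OT (s ∩ Set.Iio x) < z) : OT s ≤ z := by
  by_contra hc
  obtain ⟨x, hx, hr⟩ := rank_surj (lt_of_not_ge hc)
  exact absurd hr (ne_of_lt (h x hx))

theorem OT_union_le {s₁ s₂ : Set Ordinal.{0}} (h : ∀ x ∈ s₁, ∀ y ∈ s₂, x < y) :
    OT (s₁ ∪ s₂) ≤ OT s₁ + OT s₂ := by
  rw [OT, OT, OT, ← Ordinal.type_sum_lex, Ordinal.type_le_iff']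
  classical
  refine ⟨RelEmbedding.ofMonotone
    (fun x => if hx : x.1 ∈ s₁ then Sum.inl ⟨x.1, hx⟩ else Sum.inr ⟨x.1, x.2.resolve_left hx⟩)
    ?_⟩
  rintro ⟨a, ha⟩ ⟨b, hb⟩ hab
  dsimp only
  split_ifs with h1 h2 h2
  · exact Sum.Lex.inl hab
  · exact Sum.Lex.sep _ _
  · exact absurd (h b h2 a (ha.resolve_left h1)) (not_lt.2 hab.le)
  · exact Sum.Lex.inr hab

theorem lift_indec {e : Ordinal.{0}} (hind : ∀ a b : Ordinal.{0}, a < e → b < e → a + b < e)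
    {a b : Ordinal.{1}} (ha : a < Ordinal.lift.{1} e) (hb : b < Ordinal.lift.{1} e) :
    a + b < Ordinal.lift.{1} e := by
  obtain ⟨a₀, ha₀, rfl⟩ := Ordinal.lt_lift_iff.1 ha
  obtain ⟨b₀, hb₀, rfl⟩ := Ordinal.lt_lift_iff.1 hb
  rw [← Ordinal.lift_add]
  exact Ordinal.lift_lt.2 (hind _ _ ha₀ hb₀)

/-- Key combinatorial lemma: if a set of ordinals is partitioned by a monotone
coloring into fibers of order type `< e`, indexed by fewer than `cf e` colors,
and `e` is additively indecomposable, then the whole set has order type `≤ e`. -/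
theorem OT_le_of_small_pieces (e θ : Ordinal.{0}) (he : 0 < e) (hθ : Order.IsSuccLimit θ)
    (s : Set Ordinal.{0}) (c : Ordinal → Ordinal)
    (hcθ : ∀ x ∈ s, c x < θ)
    (hcmono : ∀ x ∈ s, ∀ y ∈ s, x ≤ y → c x ≤ c y)
    (hind : ∀ a b : Ordinal.{0}, a < e → b < e → a + b < e)
    (hcof : ∀ l < θ, l.card < e.cof)
    (hfib : ∀ b, OT {x ∈ s | c x = b} < Ordinal.lift.{1} e) :
    OT s ≤ Ordinal.lift.{1} e := by
  have hVrank : ∀ x ∈ s, ∀ (V : Set Ordinal), V = {y ∈ s | c y < c x + 1} →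
      OT (s ∩ Set.Iio x) < OT V := by
    rintro x hx V rfl
    have hxV : x ∈ {y ∈ s | c y < c x + 1} := ⟨hx, lt_of_lt_of_le (lt_add_one _) le_rfl⟩
    have heq : s ∩ Set.Iio x = {y ∈ s | c y < c x + 1} ∩ Set.Iio x := by
      ext y
      constructor
      · rintro ⟨hy, hyx⟩
        exact ⟨⟨hy, lt_of_le_of_lt (hcmono y hy x hx hyx.le) (lt_add_one _)⟩, hyx⟩
      · rintro ⟨⟨hy, _⟩, hyx⟩
        exact ⟨hy, hyx⟩
    rw [heq]
    exact rank_lt hxV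
  have key : ∀ b < θ, OT {x ∈ s | c x < b} < Ordinal.lift.{1} e := by
    intro b
    induction b using Ordinal.induction with
    | _ b IH =>
      intro hbθ
      rcases Ordinal.zero_or_succ_or_isSuccLimit b with hb | ⟨b', rfl⟩ | hb
      · subst hb
        have : {x ∈ s | c x < 0} = ∅ := by
          ext x; simp [not_lt_zero]
        rw [this]
        have : OT (∅ : Set Ordinal) = 0 := Ordinal.type_eq_zero_of_empty _
        rw [this]
        have h0 : Ordinal.lift.{1} 0 < Ordinal.lift.{1} e := Ordinal.lift_lt.2 he
        simpa using h0
      · -- successor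
        have hsplit : {x ∈ s | c x < Order.succ b'} = {x ∈ s | c x < b'} ∪ {x ∈ s | c x = b'} := by
          ext x
          simp only [Set.mem_setOf_eq, Set.mem_union, Order.lt_succ_iff]
          constructor
          · rintro ⟨hx, hc⟩
            rcases lt_or_eq_of_le hc with h | h
            · exact Or.inl ⟨hx, h⟩
            · exact Or.inr ⟨hx, h⟩
          · rintro (⟨hx, hc⟩ | ⟨hx, hc⟩)
            · exact ⟨hx, hc.le⟩
            · exact ⟨hx, hc.le⟩
        rw [hsplit]
        refine lt_of_le_of_lt (OT_union_le ?_) (lift_indec hind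
          (IH b' (Order.lt_succ b') ((Order.lt_succ b').trans hbθ)) (hfib b'))
        rintro x ⟨hx, hcx⟩ y ⟨hy, hcy⟩
        by_contra hxy
        exact absurd (hcmono y hy x hx (not_lt.1 hxy)) (not_le.2 (hcy ▸ hcx))
      · -- limit
        set f : ↥(Set.Iio b) → Ordinal.{1} :=
          fun i => OT {x ∈ s | c x < i.1 + 1} with hf
        have hle : OT {x ∈ s | c x < b} ≤ ⨆ i, f i := by
          apply OT_le_of_rank_lt
          rintro x ⟨hxs, hxb⟩
          have h1 : {x_1 ∈ s | c x_1 < b} ∩ Set.Iio x = s ∩ Set.Iio x := by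
            ext y
            exact ⟨fun ⟨⟨hy, _⟩, hyx⟩ => ⟨hy, hyx⟩,
              fun ⟨hy, hyx⟩ => ⟨⟨hy, lt_of_le_of_lt (hcmono y hy x hxs hyx.le) hxb⟩, hyx⟩⟩
          rw [h1]
          calc OT (s ∩ Set.Iio x) < OT {y ∈ s | c y < c x + 1} := hVrank x hxs _ rfl
            _ = f ⟨c x, hxb⟩ := rfl
            _ ≤ _ := le_ciSup (Ordinal.bddAbove_range.{1,0} f) (⟨c x, hxb⟩ : ↥(Set.Iio b))
        refine lt_of_le_of_lt hle (Ordinal.iSup_lt_ord ?_ ?_)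
        · rw [Ordinal.mk_Iio_ordinal, ← Ordinal.lift_cof]
          exact Cardinal.lift_lt.2 (hcof b hbθ)
        · intro i
          have h1 : i.1 + 1 < b := by
            rw [Ordinal.add_one_eq_succ]; exact hb.succ_lt i.2
          exact IH (i.1 + 1) h1 (h1.trans hbθ)
  apply OT_le_of_rank_lt
  intro x hx
  have h1 : c x + 1 < θ := by
    rw [Ordinal.add_one_eq_succ]; exact hθ.succ_lt (hcθ x hx)
  calc OT (s ∩ Set.Iio x) < OT {y ∈ s | c y < c x + 1} := hVrank x hx _ rfl
    _ < Ordinal.lift.{1} e := key _ h1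

theorem bounded_of_mk_lt_cof {o : Ordinal.{0}} {S : Set Ordinal.{0}} (hS : S ⊆ Set.Iio o)
    (h : Cardinal.mk S < Cardinal.lift.{1} o.cof) : ∃ γ < o, ∀ β ∈ S, β < γ := by
  by_contra hc
  push_neg at hc
  have hub : IsCofinal {y : ↥(Set.Iio o) | y.1 ∈ S} := by
    intro x
    obtain ⟨β, hβS, hβ⟩ := hc x.1 x.2
    exact ⟨⟨β, hS hβS⟩, hβS, hβ⟩
  have := Order.cof_le hub
  rw [Ordinal.cof_Iio, ← Ordinal.lift_cof] at this
  have heq : Cardinal.mk {y : ↥(Set.Iio o) | y.1 ∈ S} = Cardinal.mk S :=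
    Cardinal.mk_congr ⟨fun y => ⟨y.1.1, y.2⟩, fun b => ⟨⟨b.1, hS b.2⟩, b.2⟩,
      fun y => rfl, fun b => rfl⟩
  rw [heq] at this
  exact absurd h (not_lt.2 this)

def inclEmb {s t : Set Ordinal.{0}} (h : s ⊆ t) : ↥s ↪o ↥t :=
  ⟨⟨Set.inclusion h, Set.inclusion_injective h⟩, Iff.rfl⟩

theorem copies_iff {a : Ordinal.{0}} {C : Set Ordinal} (hC : C ⊆ Set.Iio a) :
    C ∈ Copies a ↔ Ordinal.lift.{1} a ≤ OT C := by
  constructor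
  · rintro ⟨f, rfl⟩
    rw [← OT_Iio]
    exact OT_le_of_emb (OrderEmbedding.ofStrictMono
      (fun x => ⟨(f x).1, ⟨f x, Set.mem_range_self x, rfl⟩⟩)
      (fun x y hxy => Subtype.mk_lt_mk.2 (f.strictMono hxy)))
  · intro h
    have h1 : OT C ≤ Ordinal.lift.{1} a := (OT_mono hC).trans_eq (OT_Iio a)
    have heq : OT (Set.Iio a) = OT C :=
      le_antisymm ((OT_Iio a).trans_le h) (h1.trans (OT_Iio a).symm.le)
    obtain ⟨e⟩ := iso_of_OT_eq heq
    refine ⟨(e.toOrderEmbedding).trans (inclEmb hC), ?_⟩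
    ext x
    constructor
    · intro hx
      exact ⟨⟨x, hC hx⟩, ⟨e.symm ⟨x, hx⟩, by simp [inclEmb, Set.inclusion]⟩, rfl⟩
    · rintro ⟨y, ⟨z, rfl⟩, rfl⟩
      exact (e z).2

/-- Setting: `κ = cf(ω^δ)`, `⟨δ_α : α<κ⟩` a nondecreasing sequence of nonzero
ordinals with `Σ_{α<κ} ω^{δ_α} = ω^δ`, realized by a partition of `[0, ω^δ)` into
consecutive intervals `L_α` of order type `ω^{δ_α}`, and moreover
`cf(ω^{δ_α}) ≥ κ` for all `α < κ`. Then `C ⊆ L` is a copy of `L` iff for every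
`α < κ` the set `S^α_C = {β < κ : ω^{δ_α} embeds into L_β ∩ C}` has cardinality
`κ`. -/
theorem stmt12 (δ : Ordinal.{0}) (hδ : 0 < δ) (κc : Cardinal.{0})
    (hκ : (ω ^ δ).cof = κc)
    (δf : Ordinal → Ordinal)
    (hpos : ∀ α < κc.ord, 0 < δf α)
    (hmono : ∀ α β : Ordinal, α ≤ β → β < κc.ord → δf α ≤ δf β)
    (hcof : ∀ α < κc.ord, κc ≤ (ω ^ δf α).cof)
    (Lset : Ordinal → Set Ordinal)
    (hconv : ∀ α < κc.ord, ∀ β < κc.ord, α < β →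
      ∀ x ∈ Lset α, ∀ y ∈ Lset β, x < y)
    (hiso : ∀ α < κc.ord, Nonempty (↥(Lset α) ≃o ↥(Set.Iio (ω ^ δf α))))
    (hunion : ⋃ α ∈ Set.Iio κc.ord, Lset α = Set.Iio (ω ^ δ))
    (C : Set Ordinal) (hCsub : C ⊆ Set.Iio (ω ^ δ)) :
    C ∈ Copies (ω ^ δ) ↔
      ∀ α < κc.ord,
        Cardinal.mk ↥{β : Ordinal | β < κc.ord ∧
          Nonempty (↥(Set.Iio (ω ^ δf α)) ↪o ↥(Lset β ∩ C))} =
        Cardinal.lift.{1} κc := by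
  -- global facts
  have hωlim : Order.IsSuccLimit (ω ^ δ) := isSuccLimit_opow_left isSuccLimit_omega0 hδ.ne'
  have hκreg : κc.IsRegular := hκ ▸ Cardinal.isRegular_cof hωlim
  have hκinf : ℵ₀ ≤ κc := hκreg.aleph0_le
  have hθlim : Order.IsSuccLimit κc.ord := Cardinal.isSuccLimit_ord hκinf
  have hκord : κc.ord.cof = κc := hκreg.cof_eq
  -- the index ("color") of an ordinal: which Lset it falls in
  have hmemL : ∀ x : Ordinal, x < ω ^ δ → {β | β < κc.ord ∧ x ∈ Lset β}.Nonempty := by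
    intro x hx
    have hx2 : x ∈ ⋃ α ∈ Set.Iio κc.ord, Lset α := by rw [hunion]; exact hx
    obtain ⟨β, hβ, hmem⟩ := Set.mem_iUnion₂.1 hx2
    exact ⟨β, hβ, hmem⟩
  let c : Ordinal → Ordinal := fun x => sInf {β | β < κc.ord ∧ x ∈ Lset β}
  have hc : ∀ x : Ordinal, x < ω ^ δ → c x < κc.ord ∧ x ∈ Lset (c x) :=
    fun x hx => csInf_mem (hmemL x hx)
  have hLsub : ∀ β, β < κc.ord → Lset β ⊆ Set.Iio (ω ^ δ) := by
    intro β hβ x hx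
    rw [← hunion]
    exact Set.mem_biUnion hβ hx
  have hLne : ∀ β, β < κc.ord → (Lset β).Nonempty := by
    intro β hβ
    obtain ⟨e⟩ := hiso β hβ
    exact ⟨(e.symm ⟨0, Ordinal.opow_pos _ omega0_pos⟩).1, (e.symm _).2⟩
  have hOTL : ∀ β, β < κc.ord → OT (Lset β) = Ordinal.lift.{1} (ω ^ δf β) := by
    intro β hβ
    obtain ⟨e⟩ := hiso β hβ
    rw [← OT_Iio]
    exact OT_eq_of_iso e
  have helt : ∀ α, α < κc.ord → ω ^ δf α < ω ^ δ := by
    intro α hα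
    have hsucc : α + 1 < κc.ord := by
      rw [Ordinal.add_one_eq_succ]; exact hθlim.succ_lt hα
    obtain ⟨x₀, hx₀⟩ := hLne (α + 1) hsucc
    have hαlt : α < α + 1 := by
      rw [Ordinal.add_one_eq_succ]; exact Order.lt_succ α
    have hsub2 : Lset α ⊆ Set.Iio x₀ := fun z hz => hconv α hα (α + 1) hsucc hαlt z hz x₀ hx₀
    have h1 : Ordinal.lift.{1} (ω ^ δf α) ≤ Ordinal.lift.{1} x₀ := by
      calc Ordinal.lift.{1} (ω ^ δf α) = OT (Lset α) := (hOTL α hα).symm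
        _ ≤ OT (Set.Iio x₀) := OT_mono hsub2
        _ = Ordinal.lift.{1} x₀ := OT_Iio x₀
    have h2 : ω ^ δf α ≤ x₀ := Ordinal.lift_le.1 h1
    exact lt_of_le_of_lt h2 (hLsub (α + 1) hsucc hx₀)
  rw [copies_iff hCsub]
  constructor
  · -- forward direction
    intro hle α hα
    set S : Set Ordinal := {β : Ordinal | β < κc.ord ∧
      Nonempty (↥(Set.Iio (ω ^ δf α)) ↪o ↥(Lset β ∩ C))} with hSdef
    have hSsub : S ⊆ Set.Iio κc.ord := fun β hβ => hβ.1
    have hSle : Cardinal.mk ↥S ≤ Cardinal.lift.{1} κc := by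
      calc Cardinal.mk ↥S ≤ Cardinal.mk ↥(Set.Iio κc.ord) := Cardinal.mk_le_mk_of_subset hSsub
        _ = Cardinal.lift.{1} κc.ord.card := Ordinal.mk_Iio_ordinal _
        _ = Cardinal.lift.{1} κc := by rw [Cardinal.card_ord]
    refine le_antisymm hSle ?_
    by_contra hlt'
    have hltS : Cardinal.mk ↥S < Cardinal.lift.{1} κc := lt_of_le_of_ne hSle
      (fun hEq => hlt' hEq.ge)
    obtain ⟨γ, hγ, hbd⟩ := bounded_of_mk_lt_cof hSsub (by rw [hκord]; exact hltS)
    obtain ⟨b, hbγ⟩ := hLne γ hγ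
    have hbδ : b < ω ^ δ := hLsub γ hγ hbγ
    have he : (0 : Ordinal) < ω ^ δf α := Ordinal.opow_pos _ omega0_pos
    -- decompose C at b
    have hsplitC : C = (C ∩ Set.Iio b) ∪ (C \ Set.Iio b) := (Set.inter_union_diff C _).symm
    have h1 : OT C ≤ OT (C ∩ Set.Iio b) + OT (C \ Set.Iio b) := by
      calc OT C = OT ((C ∩ Set.Iio b) ∪ (C \ Set.Iio b)) := by rw [← hsplitC]
        _ ≤ _ := OT_union_le (by
          rintro x ⟨_, hxb⟩ y ⟨_, hyb⟩
          exact lt_of_lt_of_le hxb (not_lt.1 hyb))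
    have h2 : OT (C ∩ Set.Iio b) ≤ Ordinal.lift.{1} b :=
      (OT_mono Set.inter_subset_right).trans_eq (OT_Iio b)
    have h3 : OT (C \ Set.Iio b) ≤ Ordinal.lift.{1} (ω ^ δf α) := by
      apply OT_le_of_small_pieces (ω ^ δf α) κc.ord he hθlim (C \ Set.Iio b) c
      · intro x hx
        exact (hc x (hCsub hx.1)).1
      · intro x hx y hy hxy
        by_contra hcc
        have hcc' : c y < c x := not_le.1 hcc
        have := hconv (c y) (hc y (hCsub hy.1)).1 (c x) (hc x (hCsub hx.1)).1 hcc'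
          y (hc y (hCsub hy.1)).2 x (hc x (hCsub hx.1)).2
        exact absurd hxy (not_le.2 this)
      · exact fun a b ha hb => principal_add_omega0_opow (δf α) ha hb
      · intro l hl
        exact lt_of_lt_of_le (Cardinal.lt_ord.1 hl) (hcof α hα)
      · -- fibers
        intro β₀
        by_cases hβ₀ : γ ≤ β₀ ∧ β₀ < κc.ord
        · have hsub4 : {x ∈ C \ Set.Iio b | c x = β₀} ⊆ Lset β₀ ∩ C := by
            rintro x ⟨⟨hxC, _⟩, hcx⟩
            exact ⟨hcx ▸ (hc x (hCsub hxC)).2, hxC⟩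
          refine lt_of_le_of_lt (OT_mono hsub4) ?_
          by_contra hge
          have hge' : Ordinal.lift.{1} (ω ^ δf α) ≤ OT (Lset β₀ ∩ C) := not_lt.1 hge
          have : OT (Set.Iio (ω ^ δf α)) ≤ OT (Lset β₀ ∩ C) := by
            rw [OT_Iio]; exact hge'
          obtain ⟨f⟩ := emb_of_OT_le this
          have hβ₀S : β₀ ∈ S := ⟨hβ₀.2, ⟨f⟩⟩
          exact absurd (hbd β₀ hβ₀S) (not_lt.2 hβ₀.1)
        · have hemp : {x ∈ C \ Set.Iio b | c x = β₀} = ∅ := by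
            ext x
            simp only [Set.mem_setOf_eq, Set.mem_empty_iff_false, iff_false, not_and]
            rintro ⟨hxC, hxb⟩ hcx
            rcases not_and_or.1 hβ₀ with h | h
            · have hβ₀γ : β₀ < γ := not_le.1 h
              have hxLβ : x ∈ Lset β₀ := hcx ▸ (hc x (hCsub hxC)).2
              have : x < b := hconv β₀ (hβ₀γ.trans hγ) γ hγ hβ₀γ x hxLβ b hbγ
              exact hxb this
            · exact h (hcx ▸ (hc x (hCsub hxC)).1)
          rw [hemp]
          have hz : OT (∅ : Set Ordinal) = 0 := Ordinal.type_eq_zero_of_empty _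
          rw [hz]
          have h0 : Ordinal.lift.{1} 0 < Ordinal.lift.{1} (ω ^ δf α) := Ordinal.lift_lt.2 he
          simpa using h0
    have h4 : Ordinal.lift.{1} (ω ^ δ) ≤ Ordinal.lift.{1} b + Ordinal.lift.{1} (ω ^ δf α) :=
      hle.trans (h1.trans (add_le_add h2 h3))
    rw [← Ordinal.lift_add] at h4
    have h5 : ω ^ δ ≤ b + ω ^ δf α := Ordinal.lift_le.1 h4
    have h6 : b + ω ^ δf α < ω ^ δ := principal_add_omega0_opow δ hbδ (helt α hα)
    exact absurd h5 (not_le.2 h6)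
  · -- backward direction
    intro hS
    rw [← OT_Iio]
    let Sst : Ordinal → Set Ordinal := fun α => {β : Ordinal | β < κc.ord ∧
      Nonempty (↥(Set.Iio (ω ^ δf α)) ↪o ↥(Lset β ∩ C))}
    have hSunb : ∀ α, α < κc.ord → ∀ γ, γ < κc.ord → ∃ β ∈ Sst α, γ ≤ β := by
      intro α hα γ hγ
      by_contra hcc
      push_neg at hcc
      have hsub : Sst α ⊆ Set.Iio γ := fun β hβ => hcc β hβ
      have h1 : Cardinal.mk ↥(Sst α) ≤ Cardinal.mk ↥(Set.Iio γ) :=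
        Cardinal.mk_le_mk_of_subset hsub
      rw [hS α hα, Ordinal.mk_Iio_ordinal] at h1
      exact absurd (Cardinal.lift_le.1 h1) (not_le.2 (Cardinal.lt_ord.1 hγ))
    -- recursively choose strictly increasing indices in the Sst's
    let g : Ordinal → Ordinal := Ordinal.lt_wf.fix
      (fun α rec => sInf {β | β ∈ Sst α ∧ ∀ α' (h : α' < α), rec α' h < β})
    have hgeq : ∀ α, g α = sInf {β | β ∈ Sst α ∧ ∀ α' (_ : α' < α), g α' < β} :=
      fun α => Ordinal.lt_wf.fix_eq _ α
    have hginv : ∀ α, α < κc.ord → g α ∈ Sst α ∧ ∀ α', α' < α → g α' < g α := by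
      intro α
      induction α using Ordinal.induction with
      | _ α IH =>
        intro hα
        have hU : ∃ γ' < κc.ord, ∀ β ∈ g '' Set.Iio α, β < γ' := by
          apply bounded_of_mk_lt_cof
          · rintro _ ⟨α', hα', rfl⟩
            exact ((IH α' hα' (hα'.trans hα)).1).1
          · rw [hκord]
            calc Cardinal.mk ↥(g '' Set.Iio α) ≤ Cardinal.mk ↥(Set.Iio α) :=
                Cardinal.mk_image_le
              _ = Cardinal.lift.{1} α.card := Ordinal.mk_Iio_ordinal α
              _ < Cardinal.lift.{1} κc := Cardinal.lift_lt.2 (Cardinal.lt_ord.1 hα)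
        obtain ⟨γ', hγ', hγbd⟩ := hU
        obtain ⟨β, hβS, hβγ⟩ := hSunb α hα γ' hγ'
        have hne : {β | β ∈ Sst α ∧ ∀ α' (_ : α' < α), g α' < β}.Nonempty :=
          ⟨β, hβS, fun α' h' => lt_of_lt_of_le (hγbd _ ⟨α', h', rfl⟩) hβγ⟩
        have h3 : g α ∈ {β | β ∈ Sst α ∧ ∀ α' (_ : α' < α), g α' < β} := by
          rw [hgeq α]; exact csInf_mem hne
        exact ⟨h3.1, fun α' h' => h3.2 α' h'⟩
    -- data: isomorphisms and embeddings
    have hiso' : ∀ α, α < κc.ord → ↥(Lset α) ≃o ↥(Set.Iio (ω ^ δf α)) :=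
      fun α h => (hiso α h).some
    have hemb : ∀ α, α < κc.ord → (↥(Set.Iio (ω ^ δf α)) ↪o ↥(Lset (g α) ∩ C)) :=
      fun α h => ((hginv α h).1.2).some
    classical
    -- the transfer function
    let Φ : Ordinal → Ordinal → Ordinal := fun α u =>
      if h : α < κc.ord ∧ u ∈ Lset α then ((hemb α h.1) ((hiso' α h.1) ⟨u, h.2⟩)).1 else 0
    have hΦmem : ∀ α u (hα : α < κc.ord) (hu : u ∈ Lset α), Φ α u ∈ Lset (g α) ∩ C := by
      intro α u hα hu
      have : Φ α u = ((hemb α hα) ((hiso' α hα) ⟨u, hu⟩)).1 := dif_pos ⟨hα, hu⟩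
      rw [this]
      exact ((hemb α hα) ((hiso' α hα) ⟨u, hu⟩)).2
    have hΦmono : ∀ α u v (hα : α < κc.ord) (hu : u ∈ Lset α) (hv : v ∈ Lset α),
        u < v → Φ α u < Φ α v := by
      intro α u v hα hu hv huv
      have h1 : Φ α u = ((hemb α hα) ((hiso' α hα) ⟨u, hu⟩)).1 := dif_pos ⟨hα, hu⟩
      have h2 : Φ α v = ((hemb α hα) ((hiso' α hα) ⟨v, hv⟩)).1 := dif_pos ⟨hα, hv⟩
      rw [h1, h2]
      exact (hemb α hα).strictMono ((hiso' α hα).strictMono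
        (show (⟨u, hu⟩ : ↥(Lset α)) < ⟨v, hv⟩ from Subtype.mk_lt_mk.2 huv))
    -- build the global embedding
    refine OT_le_of_emb (OrderEmbedding.ofStrictMono
      (fun x => (⟨Φ (c x.1) x.1, (hΦmem (c x.1) x.1 (hc x.1 x.2).1 (hc x.1 x.2).2).2⟩ : ↥C))
      ?_)
    intro x y hxy
    have hxy' : x.1 < y.1 := hxy
    rw [Subtype.mk_lt_mk]
    have hcx := hc x.1 x.2
    have hcy := hc y.1 y.2
    rcases lt_trichotomy (c x.1) (c y.1) with h | h | h
    · -- different blocks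
      have hgx := hginv (c x.1) hcx.1
      have hgy := hginv (c y.1) hcy.1
      have hglt : g (c x.1) < g (c y.1) := hgy.2 (c x.1) h
      exact hconv (g (c x.1)) hgx.1.1 (g (c y.1)) hgy.1.1 hglt
        (Φ (c x.1) x.1) (hΦmem (c x.1) x.1 hcx.1 hcx.2).1
        (Φ (c y.1) y.1) (hΦmem (c y.1) y.1 hcy.1 hcy.2).1
    · -- same block
      rw [← h]
      have hy' : y.1 ∈ Lset (c x.1) := h ▸ hcy.2
      exact hΦmono (c x.1) x.1 y.1 hcx.1 hcx.2 hy' hxy'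
    · -- impossible
      exfalso
      have := hconv (c y.1) hcy.1 (c x.1) hcx.1 h y.1 hcy.2 x.1 hcx.2
      exact absurd hxy' (not_lt.2 this.le)
end

section
/- If δ > 0 is a successor ordinal or cf(δ) = ω, then the preorder ⟨P(ω^δ), ⊆_I⟩ is σ-closed: for every sequence ⟨A_n : n < ω⟩ of copies of ω^δ with A_{n+1} ⊆_I A_n for all n < ω, there is a copy A of ω^δ such that A ⊆_I A_n for all n < ω. -/
open Ordinal Set Cardinal


noncomputable def tset (S : Set Ordinal.{0}) : Ordinal.{1} := Ordinal.type ((·<·) : S → S → Prop)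

theorem tset_mono {S T : Set Ordinal.{0}} (h : S ⊆ T) : tset S ≤ tset T :=
  Ordinal.type_le_iff'.2 ⟨⟨⟨Set.inclusion h, Set.inclusion_injective h⟩, Iff.rfl⟩⟩

theorem type_Iio (a : Ordinal.{0}) : tset (Set.Iio a) = Ordinal.lift.{1} a := by
  have h := @RelIso.ordinal_lift_type_eq _ _ _ _ isWellOrder_lt isWellOrder_lt
    (ToType.mk (o := a)).toRelIsoLT
  rwa [Ordinal.lift_uzero, Ordinal.type_toType] at h

theorem obig_iff {a : Ordinal.{0}} {S : Set Ordinal.{0}} :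
    Nonempty (↥(Set.Iio a) ↪o ↥S) ↔ Ordinal.lift.{1} a ≤ tset S := by
  rw [← type_Iio]
  constructor
  · rintro ⟨f⟩; exact Ordinal.type_le_iff'.2 ⟨f.ltEmbedding⟩
  · rintro h; obtain ⟨f⟩ := Ordinal.type_le_iff'.1 h
    exact ⟨f.orderEmbeddingOfLTEmbedding⟩

theorem tset_bounded {S : Set Ordinal.{0}} {ξ : Ordinal.{0}} (h : S ⊆ Set.Iio ξ) :
    tset S ≤ Ordinal.lift.{1} ξ := by rw [← type_Iio]; exact tset_mono h

theorem tset_sum {S T : Set Ordinal.{0}} (h : ∀ s ∈ S, ∀ t ∈ T, s < t) :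
    tset S + tset T ≤ tset (S ∪ T) := by
  rw [tset, tset, ← Ordinal.type_sum_lex]
  refine Ordinal.type_le_iff'.2 ⟨⟨⟨Sum.elim (fun s => ⟨s.1, Or.inl s.2⟩)
    (fun t => ⟨t.1, Or.inr t.2⟩), ?_⟩, ?_⟩⟩
  · rintro (s | s) (t | t) hst <;> simp only [Sum.elim_inl, Sum.elim_inr, Subtype.mk_eq_mk] at hst
    · exact congrArg Sum.inl (Subtype.ext (Subtype.mk.inj hst))
    · exact absurd hst (ne_of_lt (h _ s.2 _ t.2))
    · exact absurd hst (ne_of_gt (h _ t.2 _ s.2))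
    · exact congrArg Sum.inr (Subtype.ext (Subtype.mk.inj hst))
  · rintro (s | s) (t | t)
    · simp only [Function.Embedding.coeFn_mk, Sum.elim_inl, Sum.lex_inl_inl]
      exact Iff.rfl
    · simp only [Function.Embedding.coeFn_mk, Sum.elim_inl, Sum.elim_inr, Sum.Lex.sep, iff_true]
      exact h _ s.2 _ t.2
    · show (s.1 < t.1) ↔ _
      constructor
      · intro hh; exact absurd (lt_trans hh (h _ t.2 _ s.2)) (lt_irrefl _)
      · intro hh; exact absurd hh (by simp [Sum.lex_inr_inl])
    · simp only [Function.Embedding.coeFn_mk, Sum.elim_inr, Sum.lex_inr_inr]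
      exact Iff.rfl

theorem tset_addImage (u : Ordinal.{0}) (S : Set Ordinal.{0}) :
    tset ((u + ·) '' S) = tset S := by
  have hmono : StrictMono (u + ·) := fun x y hxy => (add_lt_add_iff_left u).2 hxy
  have hinj : Function.Injective (u + ·) := hmono.injective
  exact (RelIso.ordinal_type_eq ⟨Equiv.Set.image _ S hinj, by
    rintro ⟨x, hx⟩ ⟨y, hy⟩
    simp only [Equiv.Set.image_apply, Subtype.mk_lt_mk]
    exact add_lt_add_iff_left u⟩).symm

theorem tset_pre {a : Ordinal.{0}} {U X : Set Ordinal.{0}} (f : ↥(Set.Iio a) ↪o ↥U) :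
    tset {x | ∃ h : x < a, (f ⟨x, h⟩ : Ordinal) ∈ X} ≤ tset X := by
  set S := {x | ∃ h : x < a, (f ⟨x, h⟩ : Ordinal) ∈ X} with hS
  have hmono : StrictMono (fun z : ↥S => (⟨(f ⟨z.1, z.2.choose⟩ : Ordinal),
      z.2.choose_spec⟩ : ↥X)) := by
    rintro z w hzw
    have : (⟨z.1, z.2.choose⟩ : ↥(Set.Iio a)) < ⟨w.1, w.2.choose⟩ := hzw
    simpa using f.strictMono this
  exact Ordinal.type_le_iff'.2 ⟨(OrderEmbedding.ofStrictMono _ hmono).ltEmbedding⟩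

theorem part (δ : Ordinal.{0}) : ∀ X Y : Set Ordinal.{0},
    Ordinal.lift.{1} (ω ^ δ) ≤ tset (X ∪ Y) →
    Ordinal.lift.{1} (ω ^ δ) ≤ tset X ∨ Ordinal.lift.{1} (ω ^ δ) ≤ tset Y := by
  induction δ using Ordinal.induction with
  | _ δ IH =>
  have cover : ∀ X Y : Set Ordinal.{0}, Set.Iio (ω ^ δ) ⊆ X ∪ Y →
      Ordinal.lift.{1} (ω ^ δ) ≤ tset X ∨ Ordinal.lift.{1} (ω ^ δ) ≤ tset Y := by
    intro X Y hcov
    rcases Ordinal.zero_or_succ_or_isSuccLimit δ with h0 | ⟨β, hβ⟩ | hlim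
    · -- zero case
      subst h0
      rw [opow_zero] at hcov ⊢
      have h0m : (0 : Ordinal) ∈ X ∪ Y := hcov (by simp)
      have hle : ∀ Z : Set Ordinal.{0}, (0:Ordinal) ∈ Z → Ordinal.lift.{1} (1 : Ordinal.{0}) ≤ tset Z := by
        intro Z hZ
        rw [Ordinal.lift_one, Ordinal.one_le_iff_ne_zero]
        exact type_ne_zero_iff_nonempty.2 ⟨⟨0, hZ⟩⟩
      rcases h0m with h | h
      · exact Or.inl (hle X h)
      · exact Or.inr (hle Y h)
    · -- successor case
      subst hβ
      set c := ω ^ β with hc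
      have hδeq : ω ^ Order.succ β = c * ω := by rw [opow_succ]
      have hcpos : 0 < c := opow_pos β omega0_pos
      have hsplit : ∀ n : ℕ,
          Ordinal.lift.{1} c ≤ tset (X ∩ Set.Ico (c * n) (c * n + c)) ∨
          Ordinal.lift.{1} c ≤ tset (Y ∩ Set.Ico (c * n) (c * n + c)) := by
        intro n
        set X' := {x | x < c ∧ c * n + x ∈ X} with hX'
        set Y' := {x | x < c ∧ c * n + x ∈ Y} with hY'
        have hcov' : Set.Iio c ⊆ X' ∪ Y' := by
          intro x hx
          have hlt : c * n + x < ω ^ Order.succ β := by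
            rw [hδeq]
            calc c * n + x < c * n + c := add_lt_add_right hx _
            _ = c * (n + 1) := by rw [mul_add_one]
            _ ≤ c * ω := mul_le_mul_right (le_of_lt (nat_lt_omega0 (n+1))) c
          have := hcov hlt
          rcases this with h | h
          · exact Or.inl ⟨hx, h⟩
          · exact Or.inr ⟨hx, h⟩
        have hbig' : Ordinal.lift.{1} (ω ^ β) ≤ tset (X' ∪ Y') := by
          rw [← type_Iio c]
          exact tset_mono hcov'
        have hkey : ∀ Z' : Set Ordinal.{0}, ∀ Z : Set Ordinal.{0},
            Z' = {x | x < c ∧ c * n + x ∈ Z} →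
            Ordinal.lift.{1} c ≤ tset Z' →
            Ordinal.lift.{1} c ≤ tset (Z ∩ Set.Ico (c * n) (c * n + c)) := by
          rintro Z' Z rfl hZ'
          refine hZ'.trans ?_
          rw [← tset_addImage (c * n) _]
          refine tset_mono ?_
          rintro y ⟨x, ⟨hx1, hx2⟩, rfl⟩
          exact ⟨hx2, le_self_add, add_lt_add_right hx1 _⟩
        rcases IH β (Order.lt_succ β) X' Y' hbig' with h | h
        · exact Or.inl (hkey X' X rfl h)
        · exact Or.inr (hkey Y' Y rfl h)
      -- pigeonhole
      have hmain : ∀ Z : Set Ordinal.{0},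
          {n : ℕ | Ordinal.lift.{1} c ≤ tset (Z ∩ Set.Ico (c * n) (c * n + c))}.Infinite →
          Ordinal.lift.{1} (ω ^ Order.succ β) ≤ tset Z := by
        intro Z hinf
        set p := fun n : ℕ => Ordinal.lift.{1} c ≤ tset (Z ∩ Set.Ico (c * n) (c * n + c)) with hp
        have claim : ∀ k : ℕ, Ordinal.lift.{1} c * k ≤ tset (Z ∩ Set.Iio (c * (Nat.nth p k))) := by
          intro k
          induction k with
          | zero => simp
          | succ k ihk =>
            have hmem : p (Nat.nth p k) := Nat.nth_mem_of_infinite hinf k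
            have hsub : (Z ∩ Set.Iio (c * Nat.nth p k)) ∪
                (Z ∩ Set.Ico (c * Nat.nth p k) (c * Nat.nth p k + c)) ⊆
                Z ∩ Set.Iio (c * (Nat.nth p (k+1))) := by
              have hlt : Nat.nth p k < Nat.nth p (k+1) :=
                (Nat.nth_lt_nth hinf).2 (Nat.lt_succ_self k)
              rintro y (⟨hy1, hy2⟩ | ⟨hy1, hy2, hy3⟩)
              · refine ⟨hy1, lt_of_lt_of_le hy2 (mul_le_mul_right ?_ c)⟩
                exact_mod_cast Nat.cast_le.2 hlt.le
              · refine ⟨hy1, ?_⟩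
                have h1 : y < c * ((Nat.nth p k : Ordinal) + 1) := by
                  rw [mul_add_one]; exact hy3
                refine h1.trans_le (mul_le_mul_right ?_ c)
                have h2 : ((Nat.nth p k + 1 : ℕ) : Ordinal.{0}) ≤ ((Nat.nth p (k+1) : ℕ) : Ordinal.{0}) := by
                  exact_mod_cast Nat.succ_le_of_lt hlt
                simpa using h2
            have hsep := tset_sum (S := Z ∩ Set.Iio (c * Nat.nth p k))
              (T := Z ∩ Set.Ico (c * Nat.nth p k) (c * Nat.nth p k + c))
              (by rintro s ⟨_, hs⟩ t ⟨_, ht, _⟩; exact lt_of_lt_of_le hs ht)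
            calc Ordinal.lift.{1} c * (k+1 : ℕ)
                = Ordinal.lift.{1} c * k + Ordinal.lift.{1} c := by
                  push_cast
                  rw [mul_add_one]
              _ ≤ tset (Z ∩ Set.Iio (c * Nat.nth p k)) +
                  tset (Z ∩ Set.Ico (c * Nat.nth p k) (c * Nat.nth p k + c)) :=
                  add_le_add ihk hmem
              _ ≤ _ := hsep.trans (tset_mono hsub)
        by_contra hcon
        rw [not_le] at hcon
        rw [hδeq, Ordinal.lift_mul, Ordinal.lift_omega0] at hcon
        obtain ⟨c', hc'1, hc'2⟩ := (Ordinal.lt_mul_iff_of_isSuccLimit isSuccLimit_omega0).1 hcon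
        obtain ⟨m, rfl⟩ := Ordinal.lt_omega0.1 hc'1
        exact absurd ((claim m).trans (tset_mono Set.inter_subset_left)) (not_le.2 hc'2)
      by_cases hX : {n : ℕ | Ordinal.lift.{1} c ≤ tset (X ∩ Set.Ico (c * n) (c * n + c))}.Infinite
      · exact Or.inl (hmain X hX)
      · right
        apply hmain Y
        rw [Set.not_infinite] at hX
        refine Set.Infinite.mono ?_ (Set.Finite.infinite_compl hX)
        intro n hn
        rcases hsplit n with h | h
        · exact absurd h hn
        · exact h
    · -- limit case
      have hstep : ∀ γ, γ < δ →
          Ordinal.lift.{1} (ω ^ (γ+1)) ≤ tset X ∨ Ordinal.lift.{1} (ω ^ (γ+1)) ≤ tset Y := by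
        intro γ hγ
        have hs : γ + 1 < δ := by
          rw [add_one_eq_succ]; exact hlim.succ_lt hγ
        apply IH (γ+1) hs X Y
        have h1 : Ordinal.lift.{1} (ω ^ δ) ≤ tset (X ∪ Y) := by
          rw [← type_Iio (ω ^ δ)]; exact tset_mono hcov
        refine le_trans ?_ h1
        exact Ordinal.lift_le.2 (opow_le_opow_right omega0_pos hs.le)
      have hkey : ∀ Z : Set Ordinal.{0},
          (∀ γ₀ < δ, ∃ γ, γ₀ ≤ γ ∧ γ < δ ∧ Ordinal.lift.{1} (ω ^ (γ+1)) ≤ tset Z) →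
          Ordinal.lift.{1} (ω ^ δ) ≤ tset Z := by
        intro Z hZ
        by_contra hcon
        rw [not_le] at hcon
        obtain ⟨x, hx1, hx2⟩ := Ordinal.lt_lift_iff.1 hcon
        by_cases hx0 : x = 0
        · obtain ⟨γ, _, _, hγ3⟩ := hZ 0 hlim.pos
          rw [← hx2, Ordinal.lift_le] at hγ3
          exact absurd hγ3 (not_le.2 (hx0 ▸ opow_pos _ omega0_pos))
        · have hlog : log ω x < δ := (Ordinal.lt_opow_iff_log_lt one_lt_omega0 hx0).1 hx1
          obtain ⟨γ, hγ1, hγ2, hγ3⟩ := hZ (log ω x) hlog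
          rw [← hx2, Ordinal.lift_le] at hγ3
          have : x < ω ^ (γ + 1) := by
            refine lt_of_lt_of_le ?_ (opow_le_opow_right omega0_pos (add_le_add_left hγ1 1))
            rw [add_one_eq_succ]
            exact Ordinal.lt_opow_succ_log_self one_lt_omega0 x
          exact absurd hγ3 (not_le.2 this)
      by_cases hXside : ∀ γ₀ < δ, ∃ γ, γ₀ ≤ γ ∧ γ < δ ∧ Ordinal.lift.{1} (ω ^ (γ+1)) ≤ tset X
      · exact Or.inl (hkey X hXside)
      · right
        apply hkey Y
        push_neg at hXside
        obtain ⟨γ₀, hγ₀, hbad⟩ := hXside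
        intro γ₁ hγ₁
        set γ := max γ₀ γ₁ with hγ
        have hγδ : γ < δ := max_lt hγ₀ hγ₁
        rcases hstep γ hγδ with h | h
        · exact absurd h (not_le.2 (hbad γ (le_max_left _ _) hγδ))
        · exact ⟨γ, le_max_right _ _, hγδ, h⟩
  -- reduce general to cover
  intro X Y hbig
  obtain ⟨f⟩ := obig_iff.2 hbig
  set a := ω ^ δ
  have hcov : Set.Iio a ⊆ {x | ∃ h : x < a, (f ⟨x, h⟩ : Ordinal) ∈ X} ∪
      {x | ∃ h : x < a, (f ⟨x, h⟩ : Ordinal) ∈ Y} := by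
    intro x hx
    rcases (f ⟨x, hx⟩).2 with h | h
    · exact Or.inl ⟨hx, h⟩
    · exact Or.inr ⟨hx, h⟩
  rcases cover _ _ hcov with h | h
  · exact Or.inl (h.trans (tset_pre f))
  · exact Or.inr (h.trans (tset_pre f))

theorem osmall_iff {a : Ordinal.{0}} {S : Set Ordinal.{0}} :
    (¬ Nonempty (↥(Set.Iio a) ↪o ↥S)) ↔ tset S < Ordinal.lift.{1} a := by
  rw [obig_iff.not, not_le]

theorem tail_big {δ : Ordinal.{0}} (hδ : 0 < δ) {S : Set Ordinal.{0}}
    (hS : S ⊆ Set.Iio (ω ^ δ)) (hbig : Ordinal.lift.{1} (ω ^ δ) ≤ tset S)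
    {ξ : Ordinal.{0}} (hξ : ξ < ω ^ δ) :
    Ordinal.lift.{1} (ω ^ δ) ≤ tset (S ∩ Set.Ioi ξ) := by
  obtain ⟨f⟩ := obig_iff.2 hbig
  set a := ω ^ δ with ha
  have hlim : Order.IsSuccLimit (ω ^ δ) := isSuccLimit_opow_left isSuccLimit_omega0 hδ.ne'
  have hstep : ξ + 1 < a := by
    rw [← Order.succ_eq_add_one]
    exact hlim.succ_lt hξ
  have habs : ∀ x : Ordinal.{0}, x < a → ξ + 1 + x < a := by
    intro x hx
    calc ξ + 1 + x < ξ + 1 + a := add_lt_add_right hx _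
    _ = a := Ordinal.add_absorp hstep le_rfl
  have hge : ∀ y : ↥(Set.Iio a), (y : Ordinal) ≤ (f y : Ordinal) := by
    intro y
    have hmono : StrictMono (fun z : ↥(Set.Iio a) => (⟨(f z : Ordinal), hS (f z).2⟩ :
        ↥(Set.Iio a))) := fun z w h => by
      simpa [Subtype.mk_lt_mk] using f.strictMono h
    exact hmono.le_apply (x := y)
  have gmono : StrictMono (fun x : ↥(Set.Iio a) =>
      (⟨(f ⟨ξ + 1 + x.1, habs x.1 x.2⟩ : Ordinal),
        (f ⟨ξ + 1 + x.1, habs x.1 x.2⟩).2,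
        lt_of_lt_of_le (lt_of_lt_of_le (lt_add_one ξ) le_self_add)
          (hge ⟨ξ + 1 + x.1, habs x.1 x.2⟩)⟩ : ↥(S ∩ Set.Ioi ξ))) := by
    intro x y hxy
    have hval : x.1 < y.1 := hxy
    have : (⟨ξ + 1 + x.1, habs x.1 x.2⟩ : ↥(Set.Iio a)) < ⟨ξ + 1 + y.1, habs y.1 y.2⟩ := by
      show ξ + 1 + x.1 < ξ + 1 + y.1
      exact add_lt_add_right hval _
    exact f.strictMono this
  exact obig_iff.1 ⟨OrderEmbedding.ofStrictMono _ gmono⟩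

theorem exists_s {δ : Ordinal.{0}} (hδ : 0 < δ)
    (hcase : (∃ β : Ordinal, δ = β + 1) ∨ δ.cof = ℵ₀) :
    ∃ s : ℕ → Ordinal.{0}, (∀ n, s n < ω ^ δ) ∧ ∀ x < ω ^ δ, ∃ n, x < s n := by
  rcases hcase with ⟨β, rfl⟩ | hcof
  · have hcpos : (0:Ordinal.{0}) < ω ^ β := opow_pos β omega0_pos
    have heq : ω ^ (β + 1) = ω ^ β * ω := by
      rw [← Order.succ_eq_add_one, opow_succ]
    refine ⟨fun n => ω ^ β * n, fun n => ?_, fun x hx => ?_⟩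
    · rw [heq]
      exact (mul_lt_mul_iff_right₀ hcpos).2 (nat_lt_omega0 n)
    · rw [heq] at hx
      obtain ⟨c', hc'1, hc'2⟩ := (Ordinal.lt_mul_iff_of_isSuccLimit isSuccLimit_omega0).1 hx
      obtain ⟨n, rfl⟩ := Ordinal.lt_omega0.1 hc'1
      exact ⟨n, hc'2⟩
  · have hlim : Order.IsSuccLimit δ := by
      rcases Ordinal.zero_or_succ_or_isSuccLimit δ with h | ⟨β, hβ⟩ | h
      · exact absurd h hδ.ne'
      · exfalso
        rw [← hβ, Ordinal.cof_succ] at hcof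
        exact Cardinal.one_lt_aleph0.ne hcof
      · exact h
    obtain ⟨ι, g0, hlsub, hcard⟩ := Ordinal.exists_lsub_cof δ
    rw [hcof] at hcard
    have hne : Nonempty (ℕ ≃ ι) := by
      rw [← Cardinal.eq, hcard, Cardinal.mk_nat]
    obtain ⟨e⟩ := hne
    set g : ℕ → Ordinal.{0} := fun n => g0 (e n) with hg
    have hglt : ∀ n, g n < δ := fun n => by
      rw [← hlsub]; exact Ordinal.lt_lsub g0 (e n)
    have hgub : ∀ y, y < δ → ∃ n, y < g n := by
      intro y hy
      have h1 : y < Ordinal.lsub g0 := by rwa [hlsub]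
      obtain ⟨i, hi⟩ := Ordinal.lt_lsub_iff.1 h1
      have h2 : g0 i + 1 < δ := by
        rw [← Order.succ_eq_add_one]
        exact hlim.succ_lt (by rw [← hlsub]; exact Ordinal.lt_lsub g0 i)
      have h3 : g0 i + 1 < Ordinal.lsub g0 := by rwa [hlsub]
      obtain ⟨j, hj⟩ := Ordinal.lt_lsub_iff.1 h3
      refine ⟨e.symm j, ?_⟩
      have : g0 i < g0 j := lt_of_lt_of_le (lt_add_one _) hj
      rw [hg]
      simp only [Equiv.apply_symm_apply]
      exact lt_of_le_of_lt hi this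
    refine ⟨fun n => ω ^ g n, fun n =>
      (opow_lt_opow_iff_right one_lt_omega0).2 (hglt n), fun x hx => ?_⟩
    by_cases hx0 : x = 0
    · exact ⟨0, hx0 ▸ opow_pos _ omega0_pos⟩
    · have hlog : log ω x < δ := (Ordinal.lt_opow_iff_log_lt one_lt_omega0 hx0).1 hx
      obtain ⟨n, hn⟩ := hgub _ hlog
      refine ⟨n, lt_of_lt_of_le (Ordinal.lt_opow_succ_log_self one_lt_omega0 x) ?_⟩
      exact opow_le_opow_right omega0_pos (Order.succ_le_of_lt hn)

def Cseq (A : ℕ → Set Ordinal.{0}) : ℕ → Set Ordinal.{0}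
  | 0 => A 0
  | n + 1 => Cseq A n ∩ A (n + 1)

noncomputable def Fseq (a : Ordinal.{0}) (C : ℕ → Set Ordinal.{0}) (s : ℕ → Ordinal.{0})
    (hs : ∀ n, s n < a)
    (hbig : ∀ (n : ℕ) (b : Ordinal.{0}), b < a → Nonempty (↥(Set.Iio a) ↪o ↥(C n ∩ Set.Ioi b)))
    (hC : ∀ n, C n ⊆ Set.Iio a) (ha : 0 < a) :
    (n : ℕ) → Σ' (b : Ordinal.{0}) (_ : b < a), ↥(Set.Iio a) ↪o ↥(C n ∩ Set.Ioi b)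
  | 0 => ⟨0, ha, Classical.choice (hbig 0 0 ha)⟩
  | n + 1 =>
    let prev := Fseq a C s hs hbig hC ha n
    let b' : Ordinal.{0} := (prev.2.2 ⟨s n, hs n⟩ : ↥(C n ∩ Set.Ioi prev.1)).1
    have hb' : b' < a := hC n (prev.2.2 ⟨s n, hs n⟩).2.1
    ⟨b', hb', Classical.choice (hbig (n + 1) b' hb')⟩

section Main
variable (a : Ordinal.{0}) (C : ℕ → Set Ordinal.{0}) (s : ℕ → Ordinal.{0})
    (hs : ∀ n, s n < a)
    (hbig : ∀ (n : ℕ) (b : Ordinal.{0}), b < a → Nonempty (↥(Set.Iio a) ↪o ↥(C n ∩ Set.Ioi b)))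
    (hC : ∀ n, C n ⊆ Set.Iio a) (ha : 0 < a)

theorem Fseq_succ_b (n : ℕ) :
    (Fseq a C s hs hbig hC ha (n + 1)).1 =
      ((Fseq a C s hs hbig hC ha n).2.2 ⟨s n, hs n⟩ : ↥(C n ∩ Set.Ioi (Fseq a C s hs hbig hC ha n).1)).1 :=
  rfl

theorem Fseq_b_lt (n : ℕ) :
    (Fseq a C s hs hbig hC ha n).1 < (Fseq a C s hs hbig hC ha (n + 1)).1 := by
  rw [Fseq_succ_b]
  exact ((Fseq a C s hs hbig hC ha n).2.2 ⟨s n, hs n⟩).2.2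

theorem Fseq_b_mono {k m : ℕ} (h : k ≤ m) :
    (Fseq a C s hs hbig hC ha k).1 ≤ (Fseq a C s hs hbig hC ha m).1 := by
  induction m with
  | zero => exact le_of_eq (by rw [Nat.le_zero.1 h])
  | succ m ih =>
    rcases Nat.le_succ_iff.1 h with h' | h'
    · exact (ih h').trans (Fseq_b_lt a C s hs hbig hC ha m).le
    · subst h'; rfl

end Main


/-- `A ⊆_I B` : `A ∖ B ∈ I_{ω^δ}`, i.e. `ω^δ` does not order-embed into `A ∖ B`. -/
def leI (a : Ordinal.{0}) (A B : Set Ordinal.{0}) : Prop :=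
  ¬ Nonempty (↥(Set.Iio a) ↪o ↥(A \ B))

/-- If `δ > 0` is a successor ordinal or `cf(δ) = ω`, then `⟨P(ω^δ), ⊆_I⟩` is
σ-closed: every `⊆_I`-decreasing `ω`-sequence of copies of `ω^δ` has a `⊆_I`-lower
bound among the copies of `ω^δ`. -/
theorem stmt16 (δ : Ordinal.{0}) (hδ : 0 < δ)
    (hcase : (∃ β : Ordinal, δ = β + 1) ∨ δ.cof = ℵ₀)
    (A : ℕ → Set Ordinal) (hA : ∀ n, A n ∈ Copies (ω ^ δ))
    (hdec : ∀ n, leI (ω ^ δ) (A (n + 1)) (A n)) :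
    ∃ B ∈ Copies (ω ^ δ), ∀ n, leI (ω ^ δ) B (A n) := by
  set a := ω ^ δ with haeq
  have hapos : 0 < a := opow_pos δ omega0_pos
  have hAsub : ∀ n, A n ⊆ Set.Iio a := by
    intro n x hx
    obtain ⟨f, hf⟩ := hA n
    rw [hf] at hx
    obtain ⟨y, _, rfl⟩ := hx
    exact y.2
  have hAbig : ∀ n, Ordinal.lift.{1} a ≤ tset (A n) := by
    intro n
    obtain ⟨f, hf⟩ := hA n
    refine obig_iff.1 ⟨OrderEmbedding.ofStrictMono (fun x => (⟨(f x : Ordinal), ?_⟩ : ↥(A n))) ?_⟩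
    · rw [hf]; exact ⟨f x, Set.mem_range_self x, rfl⟩
    · intro x y hxy
      simpa [Subtype.mk_lt_mk] using f.strictMono hxy
  have hsmall_union : ∀ X Y : Set Ordinal.{0}, tset X < Ordinal.lift.{1} a →
      tset Y < Ordinal.lift.{1} a → tset (X ∪ Y) < Ordinal.lift.{1} a := by
    intro X Y h1 h2
    by_contra h
    rw [not_lt] at h
    rcases part δ X Y h with h' | h'
    · exact absurd h' (not_le.2 h1)
    · exact absurd h' (not_le.2 h2)
  have hsmall_empty : tset (∅ : Set Ordinal.{0}) < Ordinal.lift.{1} a := by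
    refine lt_of_le_of_lt (tset_bounded (ξ := 0) (by simp)) ?_
    exact Ordinal.lift_lt.2 hapos
  have hdec' : ∀ n, tset (A (n + 1) \ A n) < Ordinal.lift.{1} a := fun n => osmall_iff.1 (hdec n)
  have hdiffA : ∀ m k, k ≤ m → tset (A m \ A k) < Ordinal.lift.{1} a := by
    intro m
    induction m with
    | zero =>
      intro k hk
      rw [Nat.le_zero.1 hk]
      rw [Set.diff_self]
      exact hsmall_empty
    | succ m ih =>
      intro k hk
      rcases Nat.le_succ_iff.1 hk with h' | h'
      · have hsub : A (m + 1) \ A k ⊆ (A (m + 1) \ A m) ∪ (A m \ A k) := by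
          intro x ⟨hx1, hx2⟩
          by_cases hxm : x ∈ A m
          · exact Or.inr ⟨hxm, hx2⟩
          · exact Or.inl ⟨hx1, hxm⟩
        exact lt_of_le_of_lt (tset_mono hsub) (hsmall_union _ _ (hdec' m) (ih k h'))
      · rw [h', Set.diff_self]
        exact hsmall_empty
  have hCsub : ∀ n k, k ≤ n → Cseq A n ⊆ A k := by
    intro n
    induction n with
    | zero => intro k hk; rw [Nat.le_zero.1 hk]; exact le_rfl
    | succ n ih =>
      intro k hk
      rcases Nat.le_succ_iff.1 hk with h' | h'
      · exact Set.Subset.trans Set.inter_subset_left (ih k h')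
      · rw [h']; exact Set.inter_subset_right
  have hCIio : ∀ n, Cseq A n ⊆ Set.Iio a :=
    fun n => Set.Subset.trans (hCsub n 0 (Nat.zero_le n)) (hAsub 0)
  have hdiffC : ∀ n m, n ≤ m → tset (A m \ Cseq A n) < Ordinal.lift.{1} a := by
    intro n
    induction n with
    | zero => intro m hm; exact hdiffA m 0 (Nat.zero_le m)
    | succ n ih =>
      intro m hm
      have hsub : A m \ Cseq A (n + 1) ⊆ (A m \ Cseq A n) ∪ (A m \ A (n + 1)) := by
        intro x ⟨hx1, hx2⟩
        by_cases hxc : x ∈ Cseq A n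
        · by_cases hxa : x ∈ A (n + 1)
          · exact absurd ⟨hxc, hxa⟩ hx2
          · exact Or.inr ⟨hx1, hxa⟩
        · exact Or.inl ⟨hx1, hxc⟩
      exact lt_of_le_of_lt (tset_mono hsub)
        (hsmall_union _ _ (ih m (Nat.le_of_succ_le hm)) (hdiffA m (n + 1) hm))
  have hCbig : ∀ n, Ordinal.lift.{1} a ≤ tset (Cseq A n) := by
    intro n
    have hsub : A n ⊆ Cseq A n ∪ (A n \ Cseq A n) := by
      intro x hx
      by_cases hxc : x ∈ Cseq A n
      · exact Or.inl hxc
      · exact Or.inr ⟨hx, hxc⟩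
    have h1 : Ordinal.lift.{1} a ≤ tset (Cseq A n ∪ (A n \ Cseq A n)) :=
      (hAbig n).trans (tset_mono hsub)
    rcases part δ _ _ h1 with h | h
    · exact h
    · exact absurd h (not_le.2 (hdiffC n n le_rfl))
  obtain ⟨s, hs1, hs2⟩ := exists_s hδ hcase
  have hbigF : ∀ (n : ℕ) (b : Ordinal.{0}), b < a →
      Nonempty (↥(Set.Iio a) ↪o ↥(Cseq A n ∩ Set.Ioi b)) :=
    fun n b hb => obig_iff.2 (tail_big hδ (hCIio n) (hCbig n) hb)
  set F := Fseq a (Cseq A) s hs1 hbigF hCIio hapos with hF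
  have hex : ∀ x : ↥(Set.Iio a), ∃ n, x.1 < s n := fun x => hs2 x.1 x.2
  have hfdef : ∀ x : ↥(Set.Iio a), ∀ n : ℕ,
      ((F n).2.2 x : Ordinal) < a := fun x n => hCIio n ((F n).2.2 x).2.1
  set f : ↥(Set.Iio a) → ↥(Set.Iio a) :=
    fun x => ⟨((F (Nat.find (hex x))).2.2 x : Ordinal), hfdef x _⟩ with hfeq
  have hblock : ∀ x : ↥(Set.Iio a), ((F (Nat.find (hex x))).2.2 x : Ordinal) <
      (F (Nat.find (hex x) + 1)).1 := by
    intro x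
    rw [hF, Fseq_succ_b]
    have hxs : x < (⟨s (Nat.find (hex x)), hs1 _⟩ : ↥(Set.Iio a)) := by
      show x.1 < s (Nat.find (hex x))
      exact Nat.find_spec (hex x)
    exact Subtype.coe_lt_coe.2 (((Fseq a (Cseq A) s hs1 hbigF hCIio hapos (Nat.find (hex x))).2.2).strictMono hxs)
  have hbmono : ∀ {k m : ℕ}, k ≤ m → (F k).1 ≤ (F m).1 := by
    intro k m h
    rw [hF]
    exact Fseq_b_mono a (Cseq A) s hs1 hbigF hCIio hapos h
  have hfmono : StrictMono f := by
    intro x y hxy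
    have hvxy : x.1 < y.1 := hxy
    have hNle : Nat.find (hex x) ≤ Nat.find (hex y) :=
      Nat.find_min' (hex x) (lt_trans hvxy (Nat.find_spec (hex y)))
    show (f x : Ordinal) < (f y : Ordinal)
    rcases lt_or_eq_of_le hNle with h | h
    · have h1 := hblock x
      have h2 : (F (Nat.find (hex x) + 1)).1 ≤ (F (Nat.find (hex y))).1 :=
        hbmono (Nat.succ_le_of_lt h)
      have h3 : (F (Nat.find (hex y))).1 < ((F (Nat.find (hex y))).2.2 y : Ordinal) :=
        ((F (Nat.find (hex y))).2.2 y).2.2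
      exact lt_trans (lt_of_lt_of_le h1 h2) h3
    · show ((F (Nat.find (hex x))).2.2 x : Ordinal) < ((F (Nat.find (hex y))).2.2 y : Ordinal)
      rw [← h]
      exact Subtype.coe_lt_coe.2 (((F (Nat.find (hex x))).2.2).strictMono hxy)
  refine ⟨Subtype.val '' Set.range ⇑(OrderEmbedding.ofStrictMono f hfmono),
    ⟨OrderEmbedding.ofStrictMono f hfmono, rfl⟩, ?_⟩
  intro k
  show ¬ Nonempty _
  refine osmall_iff.2 ?_
  have hsub : (Subtype.val '' Set.range ⇑(OrderEmbedding.ofStrictMono f hfmono)) \ A k ⊆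
      Set.Iio ((F k).1) := by
    rintro y ⟨⟨x', ⟨x, rfl⟩, rfl⟩, hnot⟩
    rcases le_or_gt k (Nat.find (hex x)) with hk | hk
    · exact absurd (hCsub (Nat.find (hex x)) k hk ((F (Nat.find (hex x))).2.2 x).2.1) hnot
    · exact lt_of_lt_of_le (hblock x) (hbmono (Nat.succ_le_of_lt hk))
  exact lt_of_le_of_lt (tset_bounded hsub) (Ordinal.lift_lt.2 (F k).2.1)
end

section
/- If δ > 0 is a successor ordinal or cf(δ) = ω, then there exists a complete embedding of the preorder ⟨[ω]^ω, ⊆*⟩ (infinite sets of natural numbers ordered by almost-inclusion: S ⊆* T iff S ∖ T is finite) into the preorder ⟨P(ω^δ), ⊆_I⟩ of copies of ω^δ ordered by inclusion modulo the ideal I_{ω^δ}. -/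
open Ordinal Set Cardinal

/-- `S ⊆* T` on `[ω]^ω` : `S ∖ T` is finite. -/
def leStarNat (S T : Set ℕ) : Prop := (S \ T).Finite

noncomputable def ot (X : Set Ordinal.{0}) : Ordinal.{1} :=
  Ordinal.type (Subrel ((· < ·) : Ordinal.{0} → Ordinal.{0} → Prop) (· ∈ X))

theorem ot_Iio (a : Ordinal.{0}) : ot (Set.Iio a) = Ordinal.lift.{1} a := by
  rw [← typein_ordinal]; rfl

theorem ot_mono {X Y : Set Ordinal.{0}} (h : X ⊆ Y) : ot X ≤ ot Y := by
  rw [ot, ot, type_le_iff']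
  exact ⟨⟨⟨Set.inclusion h, Set.inclusion_injective h⟩, Iff.rfl⟩⟩

theorem ot_le_of_embeds {X Y : Set Ordinal.{0}} (f : ↥X ↪o ↥Y) : ot X ≤ ot Y := by
  rw [ot, ot, type_le_iff']
  exact ⟨f.ltEmbedding⟩

theorem embeds_iff_ot_le {X Y : Set Ordinal.{0}} :
    Nonempty (↥X ↪o ↥Y) ↔ ot X ≤ ot Y := by
  constructor
  · rintro ⟨f⟩; exact ot_le_of_embeds f
  · rw [ot, ot, type_le_iff']
    rintro ⟨f⟩
    exact ⟨RelEmbedding.orderEmbeddingOfLTEmbedding f⟩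

theorem ot_eq_of_iso {X Y : Set Ordinal.{0}} (f : ↥X ≃o ↥Y) : ot X = ot Y :=
  le_antisymm (ot_le_of_embeds f.toOrderEmbedding) (ot_le_of_embeds f.symm.toOrderEmbedding)

theorem iso_of_ot_eq {X Y : Set Ordinal.{0}} (h : ot X = ot Y) : Nonempty (↥X ≃o ↥Y) := by
  rw [ot, ot, type_eq] at h
  obtain ⟨f⟩ := h
  exact ⟨OrderIso.ofRelIsoLT f⟩

theorem ot_seg {X : Set Ordinal.{0}} {x : Ordinal.{0}} (hx : x ∈ X) :
    ot (X ∩ Set.Iio x) = typein (Subrel ((· < ·) : Ordinal.{0} → Ordinal.{0} → Prop) (· ∈ X)) ⟨x, hx⟩ := by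
  rw [← type_subrel, ot, type_eq]
  refine ⟨⟨⟨fun y => ⟨⟨y.1, y.2.1⟩, y.2.2⟩, fun b => ⟨b.1.1, b.1.2, b.2⟩, fun y => rfl, fun b => rfl⟩, Iff.rfl⟩⟩

theorem ot_seg_lt {X : Set Ordinal.{0}} {x : Ordinal.{0}} (hx : x ∈ X) :
    ot (X ∩ Set.Iio x) < ot X := by
  rw [ot_seg hx]; exact typein_lt_type _ _

theorem ot_le_iff {X : Set Ordinal.{0}} {c : Ordinal.{1}} :
    ot X ≤ c ↔ ∀ x (hx : x ∈ X), ot (X ∩ Set.Iio x) < c := by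
  constructor
  · intro h x hx; exact lt_of_lt_of_le (ot_seg_lt hx) h
  · intro h
    by_contra hc
    push_neg at hc
    obtain ⟨⟨x, hx⟩, hx2⟩ := typein_surj (Subrel ((· < ·) : Ordinal.{0} → Ordinal.{0} → Prop) (· ∈ X)) hc
    have := h x hx
    rw [ot_seg hx, hx2] at this
    exact lt_irrefl _ this

theorem ot_union_eq {X Y : Set Ordinal.{0}} {z : Ordinal.{0}}
    (hX : ∀ x ∈ X, x < z) (hY : ∀ y ∈ Y, z ≤ y) : ot (X ∪ Y) = ot X + ot Y := by
  classical
  rw [ot, ot, ot, ← type_sum_lex, type_eq]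
  have hXY : ∀ x ∈ X, ∀ y ∈ Y, x < y := fun x hx y hy => lt_of_lt_of_le (hX x hx) (hY y hy)
  have hnot : ∀ y ∈ Y, y ∉ X := fun y hy hX' => lt_irrefl y (hXY y hX' y hy)
  refine ⟨RelIso.symm ⟨⟨Sum.elim (fun x => ⟨x.1, Or.inl x.2⟩)
      (fun y => (⟨y.1, Or.inr y.2⟩ : ↥(X ∪ Y))),
      fun w => if h : w.1 ∈ X then Sum.inl ⟨w.1, h⟩ else Sum.inr ⟨w.1, w.2.resolve_left h⟩,
      ?_, ?_⟩, ?_⟩⟩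
  · rintro (x | y)
    · simp
    · simp [hnot y.1 y.2]
  · rintro ⟨w, hw⟩
    by_cases h : w ∈ X <;> simp [h]
  · rintro (x | y) (x' | y')
    · simp only [Sum.lex_inl_inl]; exact Iff.rfl
    · show (x.1 : Ordinal) < y'.1 ↔ _
      simp only [Sum.Lex.sep]
      exact iff_of_true (hXY _ x.2 _ y'.2) trivial
    · show (y.1 : Ordinal) < x'.1 ↔ _
      constructor
      · exact fun h => absurd h (not_lt_of_gt (hXY _ x'.2 _ y.2))
      · intro h; cases h
    · simp only [Sum.lex_inr_inr]; exact Iff.rfl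

theorem ot_empty : ot (∅ : Set Ordinal.{0}) = 0 := by
  rw [ot, type_eq_zero_iff_isEmpty]
  exact Subtype.isEmpty_false

theorem ot_singleton (x : Ordinal.{0}) : ot {x} = 1 := by
  rw [ot, type_eq_one_iff_unique]
  exact ⟨uniqueSingleton x⟩

theorem ot_insert_top {W : Set Ordinal.{0}} {x : Ordinal.{0}} (h : ∀ w ∈ W, w < x) :
    ot (W ∪ {x}) = ot W + 1 := by
  rw [ot_union_eq h (fun y hy => le_of_eq (mem_singleton_iff.1 hy).symm), ot_singleton]

theorem ot_lt_of_union_singleton {W : Set Ordinal.{0}} {x : Ordinal.{0}} (h : ∀ w ∈ W, w < x) :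
    ot W < ot (W ∪ {x}) := by
  rw [ot_insert_top h]
  exact lt_of_lt_of_le (Order.lt_succ _) (le_of_eq (Ordinal.add_one_eq_succ _).symm)

theorem ot_Ico (u v : Ordinal.{0}) : ot (Set.Ico u v) = Ordinal.lift.{1} (v - u) := by
  rw [← ot_Iio]
  refine ot_eq_of_iso ⟨⟨fun y => ⟨y.1 - u, ?_⟩, fun x => ⟨u + x.1, ?_, ?_⟩, ?_, ?_⟩, ?_⟩
  · show y.1 - u < v - u
    rw [Ordinal.sub_lt_of_le y.2.1, Ordinal.add_sub_cancel_of_le (le_trans y.2.1 y.2.2.le)]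
    exact y.2.2
  · exact le_self_add
  · exact (Ordinal.lt_sub).1 x.2
  · rintro ⟨y, hy1, hy2⟩
    simp only [Subtype.mk_eq_mk]
    exact Subtype.ext (Ordinal.add_sub_cancel_of_le hy1)
  · rintro ⟨x, hx⟩
    simp only [Subtype.mk_eq_mk]
    exact Ordinal.add_sub_cancel u x
  · rintro ⟨y, hy1, hy2⟩ ⟨z, hz1, hz2⟩
    show y - u ≤ z - u ↔ _
    constructor
    · intro h
      calc y = u + (y - u) := (Ordinal.add_sub_cancel_of_le hy1).symm
        _ ≤ u + (z - u) := add_le_add_right h u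
        _ = z := Ordinal.add_sub_cancel_of_le hz1
    · intro h
      rw [Ordinal.sub_le, Ordinal.add_sub_cancel_of_le hz1]
      exact h

/-! ### Block machinery -/

noncomputable def psum (X : ℕ → Set Ordinal.{0}) : ℕ → Ordinal.{1}
  | 0 => 0
  | N + 1 => psum X N + ot (X N)

theorem psum_mono (X : ℕ → Set Ordinal.{0}) : Monotone (psum X) := by
  apply monotone_nat_of_le_succ
  intro n
  exact le_self_add

theorem ot_le_psum (X : ℕ → Set Ordinal.{0}) (n : ℕ) : ot (X n) ≤ psum X (n + 1) :=
  le_add_self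

def blk (b : ℕ → Ordinal.{0}) (n : ℕ) : Set Ordinal.{0} := Set.Ico (b n) (b (n + 1))

theorem blk_subset_Iio {b : ℕ → Ordinal.{0}} {Λ : Ordinal.{0}} (hlt : ∀ n, b n < Λ) (n : ℕ) :
    blk b n ⊆ Set.Iio Λ :=
  fun x hx => lt_of_lt_of_le hx.2 (hlt (n + 1)).le

theorem mem_blk_unique {b : ℕ → Ordinal.{0}} (hmono : StrictMono b) {m n : ℕ} {x : Ordinal.{0}}
    (hm : x ∈ blk b m) (hn : x ∈ blk b n) : m = n := by
  rcases lt_trichotomy m n with h | h | h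
  · exact absurd (lt_of_lt_of_le hm.2 (hmono.monotone h)) (not_lt_of_ge hn.1)
  · exact h
  · exact absurd (lt_of_lt_of_le hn.2 (hmono.monotone h)) (not_lt_of_ge hm.1)

theorem blk_cover {b : ℕ → Ordinal.{0}} {Λ : Ordinal.{0}} (hb0 : b 0 = 0)
    (hcof : ∀ x < Λ, ∃ n, x < b n) {x : Ordinal.{0}} (hx : x < Λ) : ∃ n, x ∈ blk b n := by
  classical
  obtain ⟨m, hm⟩ := hcof x hx
  have hex : ∃ k, x < b k := ⟨m, hm⟩
  have h0 : ¬ x < b 0 := by rw [hb0]; exact not_lt_of_ge (zero_le : (0 : Ordinal) ≤ x)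
  have hpos : 0 < Nat.find hex := Nat.pos_of_ne_zero (fun h => h0 (h ▸ Nat.find_spec hex))
  refine ⟨Nat.find hex - 1, ?_, ?_⟩
  · exact not_lt.1 (Nat.find_min hex (Nat.sub_lt hpos Nat.one_pos))
  · have he : Nat.find hex - 1 + 1 = Nat.find hex := Nat.succ_pred_eq_of_pos hpos
    rw [he]
    exact Nat.find_spec hex

theorem ot_partial_union {b : ℕ → Ordinal.{0}} (hmono : StrictMono b)
    {X : ℕ → Set Ordinal.{0}} (hX : ∀ n, X n ⊆ blk b n) :
    ∀ N, ot (⋃ (n : ℕ) (_ : n < N), X n) = psum X N := by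
  intro N
  induction N with
  | zero => simp [psum, ot_empty]
  | succ N ih =>
    have he : (⋃ (n : ℕ) (_ : n < N + 1), X n) = (⋃ (n : ℕ) (_ : n < N), X n) ∪ X N := by
      ext x
      simp only [Set.mem_iUnion, Set.mem_union]
      constructor
      · rintro ⟨n, hn, hx⟩
        rcases Nat.lt_succ_iff_lt_or_eq.1 hn with h | rfl
        · exact Or.inl ⟨n, h, hx⟩
        · exact Or.inr hx
      · rintro (⟨n, hn, hx⟩ | hx)
        · exact ⟨n, Nat.lt_succ_of_lt hn, hx⟩
        · exact ⟨N, Nat.lt_succ_self N, hx⟩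
    rw [he, ot_union_eq (z := b N) ?_ ?_, ih, psum]
    · rintro x hx
      simp only [Set.mem_iUnion] at hx
      obtain ⟨n, hn, hx⟩ := hx
      exact lt_of_lt_of_le (hX n hx).2 (hmono.monotone hn)
    · exact fun y hy => (hX N hy).1

theorem ot_iUnion_le {b : ℕ → Ordinal.{0}} (hmono : StrictMono b)
    {X : ℕ → Set Ordinal.{0}} (hX : ∀ n, X n ⊆ blk b n) {c : Ordinal.{1}}
    (hc : ∀ N, psum X N ≤ c) : ot (⋃ n, X n) ≤ c := by
  rw [ot_le_iff]
  intro x hx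
  obtain ⟨m, hm⟩ := Set.mem_iUnion.1 hx
  have hsub : ((⋃ n, X n) ∩ Set.Iio x) ∪ {x} ⊆ ⋃ (n : ℕ) (_ : n < m + 1), X n := by
    rintro y (⟨hy1, hy2⟩ | hy)
    · obtain ⟨k, hk⟩ := Set.mem_iUnion.1 hy1
      refine Set.mem_iUnion.2 ⟨k, Set.mem_iUnion.2 ⟨?_, hk⟩⟩
      by_contra hk2
      have h1 : b (m + 1) ≤ b k := hmono.monotone (not_lt.1 hk2)
      have h2 : x < y := lt_of_lt_of_le (hX m hm).2 (le_trans h1 (hX k hk).1)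
      exact absurd hy2 (not_lt_of_gt h2)
    · rw [mem_singleton_iff.1 hy]
      exact Set.mem_iUnion.2 ⟨m, Set.mem_iUnion.2 ⟨Nat.lt_succ_self m, hm⟩⟩
  calc ot ((⋃ n, X n) ∩ Set.Iio x) < ot (((⋃ n, X n) ∩ Set.Iio x) ∪ {x}) :=
        ot_lt_of_union_singleton (fun w hw => hw.2)
    _ ≤ ot (⋃ (n : ℕ) (_ : n < m + 1), X n) := ot_mono hsub
    _ = psum X (m + 1) := ot_partial_union hmono hX (m + 1)
    _ ≤ c := hc (m + 1)

theorem psum_le_ot_iUnion {b : ℕ → Ordinal.{0}} (hmono : StrictMono b)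
    {X : ℕ → Set Ordinal.{0}} (hX : ∀ n, X n ⊆ blk b n) (N : ℕ) :
    psum X N ≤ ot (⋃ n, X n) := by
  rw [← ot_partial_union hmono hX N]
  exact ot_mono (fun x hx => by
    obtain ⟨n, hn⟩ := Set.mem_iUnion.1 hx
    obtain ⟨_, hx⟩ := Set.mem_iUnion.1 hn
    exact Set.mem_iUnion.2 ⟨n, hx⟩)

theorem psum_le_lift_b {b : ℕ → Ordinal.{0}} (hmono : StrictMono b) (hb0 : b 0 = 0)
    {X : ℕ → Set Ordinal.{0}} (hX : ∀ n, X n ⊆ blk b n) :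
    ∀ N, psum X N ≤ Ordinal.lift.{1} (b N) := by
  intro N
  induction N with
  | zero => simp [psum, hb0]
  | succ N ih =>
    have h1 : ot (X N) ≤ Ordinal.lift.{1} (b (N + 1) - b N) := by
      rw [← ot_Ico (b N) (b (N + 1))]
      exact ot_mono (hX N)
    calc psum X N + ot (X N) ≤ Ordinal.lift.{1} (b N) + Ordinal.lift.{1} (b (N + 1) - b N) :=
          add_le_add ih h1
      _ = Ordinal.lift.{1} (b N + (b (N + 1) - b N)) := (Ordinal.lift_add _ _).symm
      _ = Ordinal.lift.{1} (b (N + 1)) := by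
          rw [Ordinal.add_sub_cancel_of_le (hmono (Nat.lt_succ_self N)).le]

theorem ot_small {b : ℕ → Ordinal.{0}} (hmono : StrictMono b) (hb0 : b 0 = 0)
    {X : ℕ → Set Ordinal.{0}} (hX : ∀ n, X n ⊆ blk b n) {c : Ordinal.{1}}
    (hprin : Ordinal.Principal (· + ·) c)
    (hcpos : 0 < c) {N : ℕ} (hN : ∀ n, N ≤ n → ot (X n) < c) :
    ot (⋃ n, X n) ≤ Ordinal.lift.{1} (b N) + c := by
  apply ot_iUnion_le hmono hX
  intro M
  rcases le_or_gt M N with h | h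
  · exact le_trans (le_trans (psum_mono X h) (psum_le_lift_b hmono hb0 hX N))
      le_self_add
  · obtain ⟨k, rfl⟩ := Nat.exists_eq_add_of_le (Nat.le_of_lt h)
    have aux : ∀ j, ∃ t, t < c ∧ psum X (N + j) ≤ Ordinal.lift.{1} (b N) + t := by
      intro j
      induction j with
      | zero => exact ⟨0, hcpos, le_trans (psum_le_lift_b hmono hb0 hX N) (by rw [add_zero])⟩
      | succ j ih =>
        obtain ⟨t, htc, hle⟩ := ih
        refine ⟨t + ot (X (N + j)), hprin htc (hN _ (Nat.le_add_right N j)), ?_⟩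
        show psum X (N + j) + ot (X (N + j)) ≤ _
        rw [← add_assoc]
        exact add_le_add_left hle _
    obtain ⟨t, htc, hle⟩ := aux k
    exact le_trans hle (add_le_add_right htc.le _)

theorem psum_large {X : ℕ → Set Ordinal.{0}} {c : Ordinal.{1}} {M : Set ℕ} (hM : M.Infinite)
    (hge : ∀ n ∈ M, c ≤ ot (X n)) : ∀ k : ℕ, ∃ N, c * k ≤ psum X N := by
  intro k
  induction k with
  | zero => exact ⟨0, by simp⟩
  | succ k ih =>
    obtain ⟨N, hN⟩ := ih
    obtain ⟨n, hnM, hnN⟩ := hM.exists_gt N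
    refine ⟨n + 1, ?_⟩
    have h2 : c * k + c ≤ psum X n + ot (X n) := add_le_add
      (le_trans hN (psum_mono X (Nat.le_of_lt hnN))) (hge n hnM)
    calc c * ((k + 1 : ℕ) : Ordinal.{1}) = c * k + c := by
          rw [Nat.cast_succ, mul_add, mul_one]
      _ ≤ psum X n + ot (X n) := h2
      _ = psum X (n + 1) := rfl

theorem leI_iff {a : Ordinal.{0}} {A B : Set Ordinal.{0}} :
    leI a A B ↔ ot (A \ B) < Ordinal.lift.{1} a := by
  rw [leI, ← ot_Iio a, embeds_iff_ot_le, not_le]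

theorem mem_copies {a : Ordinal.{0}} {A : Set Ordinal.{0}} :
    A ∈ Copies a ↔ A ⊆ Set.Iio a ∧ Ordinal.lift.{1} a ≤ ot A := by
  constructor
  · rintro ⟨f, rfl⟩
    have hsub : Subtype.val '' Set.range ⇑f ⊆ Set.Iio a := by
      rintro x ⟨y, hy, rfl⟩
      exact y.2
    refine ⟨hsub, ?_⟩
    rw [← ot_Iio a]
    refine ot_le_of_embeds ⟨⟨fun x => ⟨(f x).1, ⟨f x, Set.mem_range_self x, rfl⟩⟩, ?_⟩, ?_⟩
    · intro x y hxy
      exact f.injective (Subtype.ext (congrArg Subtype.val hxy :))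
    · intro x y
      show ((f x).1 : Ordinal) ≤ (f y).1 ↔ x ≤ y
      rw [Subtype.coe_le_coe, f.le_iff_le]
  · rintro ⟨hsub, hle⟩
    have heq : ot A = ot (Set.Iio a) := by
      rw [ot_Iio]
      exact le_antisymm (le_trans (ot_mono hsub) (le_of_eq (ot_Iio a))) hle
    obtain ⟨g⟩ := iso_of_ot_eq heq.symm
    refine ⟨⟨⟨fun x => ⟨(g x).1, hsub (g x).2⟩, ?_⟩, ?_⟩, ?_⟩
    · intro x y hxy
      simp only [Subtype.mk_eq_mk, Subtype.val_inj] at hxy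
      exact g.injective hxy
    · intro x y
      show ((g x).1 : Ordinal) ≤ (g y).1 ↔ x ≤ y
      rw [Subtype.coe_le_coe, g.le_iff_le]
    · ext w
      constructor
      · intro hw
        refine ⟨⟨w, hsub hw⟩, ⟨g.symm ⟨w, hw⟩, ?_⟩, rfl⟩
        show (⟨(g (g.symm ⟨w, hw⟩)).1, _⟩ : ↥(Set.Iio a)) = _
        simp
      · rintro ⟨y, ⟨x, rfl⟩, rfl⟩
        exact (g x).2

theorem principal_add_lift {a : Ordinal.{0}} (h : Ordinal.Principal (· + ·) a) :
    Ordinal.Principal (· + ·) (Ordinal.lift.{1} a) := by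
  intro x y hx hy
  obtain ⟨x', hx', rfl⟩ := Ordinal.lt_lift_iff.1 hx
  obtain ⟨y', hy', rfl⟩ := Ordinal.lt_lift_iff.1 hy
  show lift.{1} x' + lift.{1} y' < lift.{1} a
  rw [← Ordinal.lift_add, Ordinal.lift_lt]
  exact h hx' hy'

open Classical in
noncomputable def famOf (F : ℕ → Set Ordinal.{0}) (S : Set ℕ) (n : ℕ) : Set Ordinal.{0} :=
  if n ∈ S then F n else ∅

theorem famOf_subset (F : ℕ → Set Ordinal.{0}) (S : Set ℕ) (n : ℕ) : famOf F S n ⊆ F n := by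
  rw [famOf]
  split
  · exact subset_rfl
  · exact Set.empty_subset _

theorem famOf_of_mem (F : ℕ → Set Ordinal.{0}) {S : Set ℕ} {n : ℕ} (h : n ∈ S) :
    famOf F S n = F n := by rw [famOf, if_pos h]

theorem famOf_of_not_mem (F : ℕ → Set Ordinal.{0}) {S : Set ℕ} {n : ℕ} (h : n ∉ S) :
    famOf F S n = ∅ := by rw [famOf, if_neg h]

theorem mem_iUnion_famOf {F : ℕ → Set Ordinal.{0}} {S : Set ℕ} {x : Ordinal.{0}} :
    x ∈ ⋃ n, famOf F S n ↔ ∃ n ∈ S, x ∈ F n := by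
  rw [Set.mem_iUnion]
  constructor
  · rintro ⟨n, hn⟩
    by_cases h : n ∈ S
    · rw [famOf_of_mem F h] at hn; exact ⟨n, h, hn⟩
    · rw [famOf_of_not_mem F h] at hn; exact absurd hn (Set.notMem_empty x)
  · rintro ⟨n, hnS, hn⟩
    exact ⟨n, by rw [famOf_of_mem F hnS]; exact hn⟩

noncomputable def gcopy (b : ℕ → Ordinal.{0}) (S : Set ℕ) : Set Ordinal.{0} :=
  ⋃ n, famOf (blk b) S n

theorem master (Λ : Ordinal.{0}) (hP : Ordinal.Principal (· + ·) Λ) (hΛpos : 0 < Λ)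
    (h1 : 1 < Λ)
    (b : ℕ → Ordinal.{0}) (hb0 : b 0 = 0) (hmono : StrictMono b)
    (hlt : ∀ n, b n < Λ) (hcof : ∀ x < Λ, ∃ n, x < b n)
    (HA : ∀ S : Set ℕ, S.Infinite → Ordinal.lift.{1} Λ ≤ ot (gcopy b S))
    (HB : ∀ W : Set Ordinal.{0}, W ⊆ Set.Iio Λ → ot W < Ordinal.lift.{1} Λ →
      ∃ c, Ordinal.Principal (· + ·) c ∧ 0 < c ∧ c < Ordinal.lift.{1} Λ ∧
        {n : ℕ | c ≤ ot (W ∩ blk b n)}.Finite)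
    (HC : ∀ A : Set Ordinal.{0}, A ⊆ Set.Iio Λ → Ordinal.lift.{1} Λ ≤ ot A →
      ∃ S : Set ℕ, S.Infinite ∧ ∀ M : Set ℕ, M.Infinite → M ⊆ S →
        Ordinal.lift.{1} Λ ≤ ot (⋃ n, famOf (fun k => A ∩ blk b k) M n)) :
    ∃ f : Set ℕ → Set Ordinal.{0},
      (∀ S : Set ℕ, S.Infinite → f S ∈ Copies Λ) ∧
      (∀ S T : Set ℕ, S.Infinite → T.Infinite →
        leStarNat S T → leI Λ (f S) (f T)) ∧
      (∀ S T : Set ℕ, S.Infinite → T.Infinite →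
        ((¬ ∃ R : Set ℕ, R.Infinite ∧ leStarNat R S ∧ leStarNat R T) ↔
          ¬ ∃ D ∈ Copies Λ, leI Λ D (f S) ∧ leI Λ D (f T))) ∧
      (∀ A ∈ Copies Λ, ∃ S : Set ℕ, S.Infinite ∧
        ∀ S' : Set ℕ, S'.Infinite → leStarNat S' S →
          ∃ D ∈ Copies Λ, leI Λ D (f S') ∧ leI Λ D A) := by
  have hLP : Ordinal.Principal (· + ·) (Ordinal.lift.{1} Λ) := principal_add_lift hP
  have hΛpos' : (0 : Ordinal.{1}) < Ordinal.lift.{1} Λ := by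
    simpa using Ordinal.lift_lt.2 hΛpos
  have hgsub : ∀ S : Set ℕ, gcopy b S ⊆ Set.Iio Λ := by
    intro S x hx
    obtain ⟨n, _, hn⟩ := mem_iUnion_famOf.1 hx
    exact blk_subset_Iio hlt n hn
  have hgmem : ∀ {x : Ordinal.{0}} {n : ℕ} {S : Set ℕ}, x ∈ blk b n → n ∈ S → x ∈ gcopy b S :=
    fun hx hn => mem_iUnion_famOf.2 ⟨_, hn, hx⟩
  have hgnot : ∀ {x : Ordinal.{0}} {n : ℕ} {S : Set ℕ}, x ∈ blk b n → n ∉ S → x ∉ gcopy b S := by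
    intro x n S hx hn hmem
    obtain ⟨m, hmS, hm⟩ := mem_iUnion_famOf.1 hmem
    exact hn (mem_blk_unique hmono hx hm ▸ hmS)
  have hcopy : ∀ S : Set ℕ, S.Infinite → gcopy b S ∈ Copies Λ :=
    fun S hS => mem_copies.2 ⟨hgsub S, HA S hS⟩
  -- the ⊆* ⇒ ⊆_I direction (ce1), proven in slightly more general form
  have hce1 : ∀ (V : Set Ordinal.{0}) (T : Set ℕ), (∀ x ∈ V, ∃ n ∈ T, x ∈ blk b n) →
      T.Finite → ot V < Ordinal.lift.{1} Λ := by
    intro V T hV hT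
    obtain ⟨N, hN⟩ := hT.bddAbove
    have hsub : V ⊆ ⋃ n, famOf (fun k => V ∩ blk b k) T n := by
      intro x hx
      obtain ⟨n, hnT, hn⟩ := hV x hx
      exact mem_iUnion_famOf.2 ⟨n, hnT, hx, hn⟩
    have hsmall : ot (⋃ n, famOf (fun k => V ∩ blk b k) T n) ≤
        Ordinal.lift.{1} (b (N + 1)) + 1 := by
      apply ot_small hmono hb0
        (fun n => (famOf_subset _ _ n).trans (Set.inter_subset_right))
        Ordinal.principal_add_one zero_lt_one
      intro n hn
      have hnT : n ∉ T := fun hmem => absurd (hN hmem) (by omega)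
      rw [famOf_of_not_mem _ hnT, ot_empty]
      exact zero_lt_one
    calc ot V ≤ _ := ot_mono hsub
      _ ≤ Ordinal.lift.{1} (b (N + 1)) + 1 := hsmall
      _ < Ordinal.lift.{1} Λ := hLP (Ordinal.lift_lt.2 (hlt (N + 1)))
          (by simpa using Ordinal.lift_lt.2 h1)
  -- incompatibility (core of ce2)
  have hincomp : ∀ S T : Set ℕ, (S ∩ T).Finite → ∀ D ∈ Copies Λ,
      ¬ (leI Λ D (gcopy b S) ∧ leI Λ D (gcopy b T)) := by
    rintro S T hST D hD ⟨hDS, hDT⟩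
    obtain ⟨hDsub, hDot⟩ := mem_copies.1 hD
    rw [leI_iff] at hDS hDT
    obtain ⟨c₁, hc₁p, hc₁0, hc₁Λ, hfin₁⟩ := HB _ (fun x hx => hDsub hx.1) hDS
    obtain ⟨c₂, hc₂p, hc₂0, hc₂Λ, hfin₂⟩ := HB _ (fun x hx => hDsub hx.1) hDT
    set c := max c₁ c₂ with hc
    have hcp : Ordinal.Principal (· + ·) c := by
      rcases max_choice c₁ c₂ with h | h <;> rw [hc, h] <;> assumption
    have hc0 : 0 < c := lt_max_of_lt_left hc₁0
    have hcΛ : c < Ordinal.lift.{1} Λ := max_lt hc₁Λ hc₂Λ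
    obtain ⟨N, hN⟩ := (hST.union (hfin₁.union hfin₂)).bddAbove
    have hkey : ∀ n, N + 1 ≤ n → ot (D ∩ blk b n) < c := by
      intro n hn
      have hnbad : n ∉ (S ∩ T) ∪ ({n : ℕ | c₁ ≤ ot ((D \ gcopy b S) ∩ blk b n)} ∪
          {n : ℕ | c₂ ≤ ot ((D \ gcopy b T) ∩ blk b n)}) := fun hmem =>
        absurd (hN hmem) (by omega)
      simp only [Set.mem_union, not_or, Set.mem_inter_iff, Set.mem_setOf_eq] at hnbad
      obtain ⟨hnST, hn₁, hn₂⟩ := hnbad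
      rcases not_and_or.1 hnST with hnS | hnT
      · have hsub2 : D ∩ blk b n ⊆ (D \ gcopy b S) ∩ blk b n :=
          fun x hx => ⟨⟨hx.1, hgnot hx.2 hnS⟩, hx.2⟩
        exact lt_of_le_of_lt (ot_mono hsub2) (lt_max_of_lt_left (not_le.1 hn₁))
      · have hsub2 : D ∩ blk b n ⊆ (D \ gcopy b T) ∩ blk b n :=
          fun x hx => ⟨⟨hx.1, hgnot hx.2 hnT⟩, hx.2⟩
        exact lt_of_le_of_lt (ot_mono hsub2) (lt_max_of_lt_right (not_le.1 hn₂))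
    have hDcov : D ⊆ ⋃ n, (fun k => D ∩ blk b k) n := by
      intro x hx
      obtain ⟨n, hn⟩ := blk_cover hb0 hcof (hDsub hx)
      exact Set.mem_iUnion.2 ⟨n, hx, hn⟩
    have : ot D ≤ Ordinal.lift.{1} (b (N + 1)) + c :=
      le_trans (ot_mono hDcov) (ot_small hmono hb0 (fun n => Set.inter_subset_right) hcp hc0 hkey)
    exact absurd (lt_of_le_of_lt (le_trans hDot this)
      (hLP (Ordinal.lift_lt.2 (hlt (N + 1))) hcΛ)) (lt_irrefl _)
  refine ⟨gcopy b, hcopy, ?_, ?_, ?_⟩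
  · -- ce1
    intro S T _ _ hST
    rw [leI_iff]
    apply hce1 _ (S \ T) _ hST
    intro x hx
    obtain ⟨n, hnS, hn⟩ := mem_iUnion_famOf.1 hx.1
    have hnT : n ∉ T := fun hnT => hx.2 (hgmem hn hnT)
    exact ⟨n, ⟨hnS, hnT⟩, hn⟩
  · -- ce2
    intro S T hS hT
    apply not_congr
    constructor
    · rintro ⟨R, hR, hRS, hRT⟩
      have hfin : (R \ (S ∩ T)).Finite := by
        apply Set.Finite.subset (hRS.union hRT)
        intro x hx
        rcases not_and_or.1 (fun h => hx.2 h) with h | h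
        · exact Or.inl ⟨hx.1, h⟩
        · exact Or.inr ⟨hx.1, h⟩
      have hSTinf : (S ∩ T).Infinite := by
        have := hR.diff hfin
        apply Set.Infinite.mono _ this
        intro x hx
        by_contra hxST
        exact hx.2 ⟨hx.1, hxST⟩
      refine ⟨gcopy b (S ∩ T), hcopy _ hSTinf, ?_, ?_⟩ <;> rw [leI_iff]
      · have : gcopy b (S ∩ T) \ gcopy b S = ∅ := by
          rw [Set.eq_empty_iff_forall_notMem]
          rintro x ⟨hx1, hx2⟩
          obtain ⟨n, hn, hxn⟩ := mem_iUnion_famOf.1 hx1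
          exact hx2 (hgmem hxn hn.1)
        rw [this, ot_empty]; exact hΛpos'
      · have : gcopy b (S ∩ T) \ gcopy b T = ∅ := by
          rw [Set.eq_empty_iff_forall_notMem]
          rintro x ⟨hx1, hx2⟩
          obtain ⟨n, hn, hxn⟩ := mem_iUnion_famOf.1 hx1
          exact hx2 (hgmem hxn hn.2)
        rw [this, ot_empty]; exact hΛpos'
    · rintro ⟨D, hD, hDS, hDT⟩
      have hSTinf : (S ∩ T).Infinite := by
        by_contra h
        exact hincomp S T (Set.not_infinite.1 h) D hD ⟨hDS, hDT⟩
      refine ⟨S ∩ T, hSTinf, ?_, ?_⟩ <;> rw [leStarNat]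
      · have : (S ∩ T) \ S = ∅ := by
          rw [Set.eq_empty_iff_forall_notMem]; rintro x ⟨hx1, hx2⟩; exact hx2 hx1.1
        rw [this]; exact Set.finite_empty
      · have : (S ∩ T) \ T = ∅ := by
          rw [Set.eq_empty_iff_forall_notMem]; rintro x ⟨hx1, hx2⟩; exact hx2 hx1.2
        rw [this]; exact Set.finite_empty
  · -- ce3
    intro A hA
    obtain ⟨hAsub, hAot⟩ := mem_copies.1 hA
    obtain ⟨S, hS, hSM⟩ := HC A hAsub hAot
    refine ⟨S, hS, ?_⟩
    intro S' hS' hS'S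
    set M := S' ∩ S with hM
    have hMinf : M.Infinite := by
      have := hS'.diff hS'S
      apply Set.Infinite.mono _ this
      intro x hx
      by_contra hxM
      exact hx.2 ⟨hx.1, fun hxS => hxM ⟨hx.1, hxS⟩⟩
    set D := ⋃ n, famOf (fun k => A ∩ blk b k) M n with hD
    have hDsubA : D ⊆ A := by
      intro x hx
      obtain ⟨n, _, hn⟩ := mem_iUnion_famOf.1 hx
      exact hn.1
    have hDcopy : D ∈ Copies Λ :=
      mem_copies.2 ⟨fun x hx => hAsub (hDsubA hx), hSM M hMinf Set.inter_subset_right⟩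
    refine ⟨D, hDcopy, ?_, ?_⟩ <;> rw [leI_iff]
    · have : D \ gcopy b S' = ∅ := by
        rw [Set.eq_empty_iff_forall_notMem]
        rintro x ⟨hx1, hx2⟩
        obtain ⟨n, hn, hxn⟩ := mem_iUnion_famOf.1 hx1
        exact hx2 (hgmem hxn.2 hn.1)
      rw [this, ot_empty]; exact hΛpos'
    · have : D \ A = ∅ := by
        rw [Set.eq_empty_iff_forall_notMem]
        rintro x ⟨hx1, hx2⟩
        exact hx2 (hDsubA hx1)
      rw [this, ot_empty]; exact hΛpos'

section Succ

variable (β : Ordinal.{0})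

theorem le_of_forall_mul {o : Ordinal.{1}} (h : ∀ k : ℕ, Ordinal.lift.{1} (ω ^ β) * k ≤ o) :
    Ordinal.lift.{1} (ω ^ (β + 1)) ≤ o := by
  by_contra hc
  obtain ⟨y, hy, rfl⟩ := Ordinal.lt_lift_iff.1 (not_le.1 hc)
  rw [opow_add, opow_one] at hy
  obtain ⟨c', hc', hyc⟩ := (lt_mul_iff_of_isSuccLimit isSuccLimit_omega0).1 hy
  obtain ⟨k, rfl⟩ := lt_omega0.1 hc'
  have h2 : Ordinal.lift.{1} y < Ordinal.lift.{1} (ω ^ β * k) := Ordinal.lift_lt.2 hyc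
  rw [Ordinal.lift_mul, Ordinal.lift_natCast] at h2
  exact absurd (h k) (not_le.2 h2)

theorem blk_succ_ot (n : ℕ) :
    ot (blk (fun n : ℕ => ω ^ β * n) n) = Ordinal.lift.{1} (ω ^ β) := by
  show ot (Set.Ico (ω ^ β * n) (ω ^ β * (n + 1 : ℕ))) = _
  rw [ot_Ico]
  congr 1
  rw [Nat.cast_succ, mul_add, mul_one, Ordinal.add_sub_cancel]

theorem bmono_succ : StrictMono (fun n : ℕ => ω ^ β * n) := by
  intro m n h
  exact (mul_lt_mul_iff_right₀ (opow_pos β omega0_pos)).2 (Nat.cast_lt.2 h)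

theorem case_succ :
    ∃ f : Set ℕ → Set Ordinal.{0},
      (∀ S : Set ℕ, S.Infinite → f S ∈ Copies (ω ^ (β + 1))) ∧
      (∀ S T : Set ℕ, S.Infinite → T.Infinite →
        leStarNat S T → leI (ω ^ (β + 1)) (f S) (f T)) ∧
      (∀ S T : Set ℕ, S.Infinite → T.Infinite →
        ((¬ ∃ R : Set ℕ, R.Infinite ∧ leStarNat R S ∧ leStarNat R T) ↔
          ¬ ∃ D ∈ Copies (ω ^ (β + 1)), leI (ω ^ (β + 1)) D (f S) ∧ leI (ω ^ (β + 1)) D (f T))) ∧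
      (∀ A ∈ Copies (ω ^ (β + 1)), ∃ S : Set ℕ, S.Infinite ∧
        ∀ S' : Set ℕ, S'.Infinite → leStarNat S' S →
          ∃ D ∈ Copies (ω ^ (β + 1)), leI (ω ^ (β + 1)) D (f S') ∧ leI (ω ^ (β + 1)) D A) := by
  set Λ := ω ^ (β + 1) with hΛ
  set b : ℕ → Ordinal.{0} := fun n => ω ^ β * n with hb
  have hmono : StrictMono b := bmono_succ β
  have hb0 : b 0 = 0 := by simp [hb]
  have hβpos : (0 : Ordinal.{0}) < ω ^ β := opow_pos β omega0_pos
  have hlt : ∀ n, b n < Λ := by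
    intro n
    rw [hΛ, opow_add, opow_one]
    exact (mul_lt_mul_iff_right₀ hβpos).2 (nat_lt_omega0 n)
  have hcof : ∀ x < Λ, ∃ n, x < b n := by
    intro x hx
    rw [hΛ, opow_add, opow_one] at hx
    obtain ⟨c', hc', hxc⟩ := (lt_mul_iff_of_isSuccLimit isSuccLimit_omega0).1 hx
    obtain ⟨k, rfl⟩ := lt_omega0.1 hc'
    exact ⟨k, hxc⟩
  have hc_prin : Ordinal.Principal (· + ·) (Ordinal.lift.{1} (ω ^ β)) :=
    principal_add_lift (principal_add_omega0_opow β)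
  have hc_pos : (0 : Ordinal.{1}) < Ordinal.lift.{1} (ω ^ β) := by simpa using Ordinal.lift_lt.2 hβpos
  have hc_lt : Ordinal.lift.{1} (ω ^ β) < Ordinal.lift.{1} Λ := by
    rw [Ordinal.lift_lt, hΛ]
    exact (opow_lt_opow_iff_right one_lt_omega0).2 (lt_add_one β)
  have hP : Ordinal.Principal (· + ·) Λ := principal_add_omega0_opow (β + 1)
  have hΛpos : 0 < Λ := opow_pos _ omega0_pos
  have h1 : 1 < Λ := by
    calc (1 : Ordinal.{0}) = ω ^ (0 : Ordinal.{0}) := (opow_zero ω).symm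
      _ < Λ := (opow_lt_opow_iff_right one_lt_omega0).2 (lt_of_le_of_lt (zero_le : (0 : Ordinal) ≤ β) (lt_add_one β))
  apply master Λ hP hΛpos h1 b hb0 hmono hlt hcof
  · -- HA
    intro S hS
    apply le_of_forall_mul
    intro k
    obtain ⟨N, hN⟩ := psum_large (X := famOf (blk b) S) hS (fun n hn => by
      rw [famOf_of_mem _ hn, blk_succ_ot β n]) k
    exact le_trans hN (psum_le_ot_iUnion hmono (fun n => famOf_subset _ _ n) N)
  · -- HB
    intro W hWsub hW
    refine ⟨Ordinal.lift.{1} (ω ^ β), hc_prin, hc_pos, hc_lt, ?_⟩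
    by_contra hinf
    have hinf' : {n : ℕ | Ordinal.lift.{1} (ω ^ β) ≤ ot (W ∩ blk b n)}.Infinite :=
      hinf
    have : Ordinal.lift.{1} Λ ≤ ot W := by
      apply le_of_forall_mul
      intro k
      obtain ⟨N, hN⟩ := psum_large (X := fun n => W ∩ blk b n) hinf' (fun n hn => hn) k
      refine le_trans hN (le_trans (psum_le_ot_iUnion hmono (fun n => Set.inter_subset_right) N)
        (ot_mono ?_))
      exact Set.iUnion_subset (fun n => Set.inter_subset_left)
    exact absurd hW (not_lt.2 this)
  · -- HC
    intro A hAsub hAot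
    refine ⟨{n : ℕ | Ordinal.lift.{1} (ω ^ β) ≤ ot (A ∩ blk b n)}, ?_, ?_⟩
    · by_contra hfin
      obtain ⟨N, hN⟩ := (Set.not_infinite.1 hfin).bddAbove
      have hsmall : ot (⋃ n, (fun k => A ∩ blk b k) n) ≤
          Ordinal.lift.{1} (b (N + 1)) + Ordinal.lift.{1} (ω ^ β) := by
        apply ot_small hmono hb0 (fun n => Set.inter_subset_right) hc_prin hc_pos
        intro n hn
        have : n ∉ {n : ℕ | Ordinal.lift.{1} (ω ^ β) ≤ ot (A ∩ blk b n)} :=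
          fun hmem => absurd (hN hmem) (by omega)
        exact not_le.1 this
      have hcov : A ⊆ ⋃ n, (fun k => A ∩ blk b k) n := by
        intro x hx
        obtain ⟨n, hn⟩ := blk_cover hb0 hcof (hAsub hx)
        exact Set.mem_iUnion.2 ⟨n, hx, hn⟩
      have : ot A < Ordinal.lift.{1} Λ :=
        lt_of_le_of_lt (le_trans (ot_mono hcov) hsmall)
          (principal_add_lift hP (Ordinal.lift_lt.2 (hlt (N + 1))) hc_lt)
      exact absurd hAot (not_le.2 this)
    · intro M hM hMS
      apply le_of_forall_mul
      intro k
      obtain ⟨N, hN⟩ := psum_large (X := famOf (fun k => A ∩ blk b k) M) hM (fun n hn => by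
        rw [famOf_of_mem _ hn]; exact hMS hn) k
      exact le_trans hN (psum_le_ot_iUnion hmono
        (fun n => (famOf_subset _ _ n).trans Set.inter_subset_right) N)

end Succ

section Cof

theorem case_cof (δ : Ordinal.{0}) (hδ : 0 < δ) (hcof : δ.cof = Cardinal.aleph0) :
    ∃ f : Set ℕ → Set Ordinal.{0},
      (∀ S : Set ℕ, S.Infinite → f S ∈ Copies (ω ^ δ)) ∧
      (∀ S T : Set ℕ, S.Infinite → T.Infinite →
        leStarNat S T → leI (ω ^ δ) (f S) (f T)) ∧
      (∀ S T : Set ℕ, S.Infinite → T.Infinite →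
        ((¬ ∃ R : Set ℕ, R.Infinite ∧ leStarNat R S ∧ leStarNat R T) ↔
          ¬ ∃ D ∈ Copies (ω ^ δ), leI (ω ^ δ) D (f S) ∧ leI (ω ^ δ) D (f T))) ∧
      (∀ A ∈ Copies (ω ^ δ), ∃ S : Set ℕ, S.Infinite ∧
        ∀ S' : Set ℕ, S'.Infinite → leStarNat S' S →
          ∃ D ∈ Copies (ω ^ δ), leI (ω ^ δ) D (f S') ∧ leI (ω ^ δ) D A) := by
  classical
  have hlim : Order.IsSuccLimit δ := aleph0_le_cof.1 (le_of_eq hcof.symm)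
  obtain ⟨fs, hfs⟩ := Ordinal.exists_fundamental_sequence δ
  have hord : δ.cof.ord = ω := by rw [hcof, Cardinal.ord_aleph0]
  set γ : ℕ → Ordinal.{0} := fun n => fs n (by rw [hord]; exact nat_lt_omega0 n) with hγ
  have γmono : StrictMono γ := fun m n h => hfs.2.1 _ _ (Nat.cast_lt.2 h)
  have γlt : ∀ n, γ n < δ := fun n => hfs.lt _
  have γcof : ∀ e < δ, ∃ n, e ≤ γ n := by
    intro e he
    have he' : e < Ordinal.blsub δ.cof.ord fs := by rw [hfs.blsub_eq]; exact he
    obtain ⟨i, hi, hle⟩ := Ordinal.lt_blsub_iff.1 he'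
    have hi' : i < ω := by rw [← hord]; exact hi
    obtain ⟨n, rfl⟩ := lt_omega0.1 hi'
    exact ⟨n, hle⟩
  set Λ := ω ^ δ with hΛ
  set b : ℕ → Ordinal.{0} := fun n => match n with
    | 0 => 0
    | k + 1 => ω ^ γ k
    with hb
  have hb0 : b 0 = 0 := rfl
  have hmono : StrictMono b := by
    apply strictMono_nat_of_lt_succ
    intro n
    match n with
    | 0 => exact opow_pos _ omega0_pos
    | k + 1 => exact (opow_lt_opow_iff_right one_lt_omega0).2 (γmono (Nat.lt_succ_self k))
  have hlt : ∀ n, b n < Λ := by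
    intro n
    match n with
    | 0 => exact opow_pos _ omega0_pos
    | k + 1 => exact (opow_lt_opow_iff_right one_lt_omega0).2 (γlt k)
  have hcofb : ∀ x < Λ, ∃ n, x < b n := by
    intro x hx
    rw [hΛ] at hx
    obtain ⟨e, he, hxe⟩ := (lt_opow_of_isSuccLimit omega0_ne_zero hlim).1 hx
    obtain ⟨n, hn⟩ := γcof e he
    exact ⟨n + 1, lt_of_lt_of_le hxe (opow_le_opow_right omega0_pos hn)⟩
  have hbprin : ∀ k, Ordinal.Principal (· + ·) (Ordinal.lift.{1} (b (k + 1))) := by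
    intro k
    exact principal_add_lift (principal_add_omega0_opow (γ k))
  have hbpos : ∀ k, (0 : Ordinal.{1}) < Ordinal.lift.{1} (b (k + 1)) := by
    intro k
    simpa using Ordinal.lift_lt.2 (opow_pos (γ k) omega0_pos)
  have hotblk : ∀ n, ot (blk b n) = Ordinal.lift.{1} (b (n + 1)) := by
    intro n
    rw [blk, ot_Ico]
    congr 1
    match n with
    | 0 => exact Ordinal.sub_zero _
    | k + 1 =>
      have habs : b (k + 1) + b (k + 2) = b (k + 2) :=
        add_omega0_opow ((opow_lt_opow_iff_right one_lt_omega0).2 (γmono (Nat.lt_succ_self k)))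
      calc b (k + 2) - b (k + 1) = (b (k + 1) + b (k + 2)) - b (k + 1) := by rw [habs]
        _ = b (k + 2) := Ordinal.add_sub_cancel _ _
  have hP : Ordinal.Principal (· + ·) Λ := principal_add_omega0_opow δ
  have hΛpos : 0 < Λ := opow_pos _ omega0_pos
  have h1 : 1 < Λ := by
    calc (1 : Ordinal.{0}) = ω ^ (0 : Ordinal.{0}) := (opow_zero ω).symm
      _ < Λ := (opow_lt_opow_iff_right one_lt_omega0).2 hδ
  apply master Λ hP hΛpos h1 b hb0 hmono hlt hcofb
  · -- HA
    intro S hS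
    by_contra hc
    obtain ⟨y, hyΛ, heq⟩ := Ordinal.lt_lift_iff.1 (not_le.1 hc)
    obtain ⟨m, hym⟩ := hcofb y hyΛ
    obtain ⟨n, hnS, hmn⟩ := hS.exists_gt m
    have h2 : Ordinal.lift.{1} (b (n + 1)) ≤ ot (gcopy b S) := by
      rw [← hotblk n]
      refine le_trans (le_of_eq (congrArg ot (famOf_of_mem (blk b) hnS).symm)) ?_
      exact ot_mono (Set.subset_iUnion (famOf (blk b) S) n)
    rw [← heq] at h2
    have h3 : Ordinal.lift.{1} y < Ordinal.lift.{1} (b (n + 1)) :=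
      Ordinal.lift_lt.2 (lt_of_lt_of_le hym (hmono.monotone (show m ≤ n + 1 by omega)))
    exact absurd h2 (not_le.2 h3)
  · -- HB
    intro W hWsub hW
    obtain ⟨w, hwΛ, heq⟩ := Ordinal.lt_lift_iff.1 hW
    obtain ⟨m, hwm⟩ := hcofb w hwΛ
    match m with
    | 0 => exact absurd hwm (not_lt_of_ge (zero_le : (0 : Ordinal) ≤ w))
    | j + 1 =>
      refine ⟨Ordinal.lift.{1} (b (j + 1)), hbprin j, hbpos j,
        Ordinal.lift_lt.2 (hlt (j + 1)), ?_⟩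
      have hempty : {n : ℕ | Ordinal.lift.{1} (b (j + 1)) ≤ ot (W ∩ blk b n)} = ∅ := by
        rw [Set.eq_empty_iff_forall_notMem]
        intro n hn
        have h2 : ot (W ∩ blk b n) ≤ ot W := ot_mono Set.inter_subset_left
        rw [← heq] at h2
        exact absurd (le_trans hn h2) (not_le.2 (Ordinal.lift_lt.2 hwm))
      rw [hempty]
      exact Set.finite_empty
  · -- HC
    intro A hAsub hAot
    have claim : ∀ k N : ℕ, ∃ n, N ≤ n ∧ Ordinal.lift.{1} (b (k + 1)) ≤ ot (A ∩ blk b n) := by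
      intro k N
      by_contra hcl
      push_neg at hcl
      have hsmall : ot (⋃ n, (fun i => A ∩ blk b i) n) ≤
          Ordinal.lift.{1} (b N) + Ordinal.lift.{1} (b (k + 1)) := by
        apply ot_small hmono hb0 (fun n => Set.inter_subset_right) (hbprin k) (hbpos k)
        intro n hn
        exact hcl n hn
      have hcov : A ⊆ ⋃ n, (fun i => A ∩ blk b i) n := by
        intro x hx
        obtain ⟨n, hn⟩ := blk_cover hb0 hcofb (hAsub hx)
        exact Set.mem_iUnion.2 ⟨n, hx, hn⟩
      have : ot A < Ordinal.lift.{1} Λ :=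
        lt_of_le_of_lt (le_trans (ot_mono hcov) hsmall)
          (principal_add_lift hP (Ordinal.lift_lt.2 (hlt N)) (Ordinal.lift_lt.2 (hlt (k + 1))))
      exact absurd hAot (not_le.2 this)
    set nseq : ℕ → ℕ := fun k => Nat.rec (Classical.choose (claim 0 0))
      (fun k ih => Classical.choose (claim (k + 1) (ih + 1))) k with hnseq
    have hspec0 : 0 ≤ nseq 0 ∧ Ordinal.lift.{1} (b 1) ≤ ot (A ∩ blk b (nseq 0)) :=
      Classical.choose_spec (claim 0 0)
    have hspecS : ∀ k, nseq k + 1 ≤ nseq (k + 1) ∧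
        Ordinal.lift.{1} (b (k + 2)) ≤ ot (A ∩ blk b (nseq (k + 1))) := fun k =>
      Classical.choose_spec (claim (k + 1) (nseq k + 1))
    have hnmono : StrictMono nseq :=
      strictMono_nat_of_lt_succ (fun k => by have := (hspecS k).1; omega)
    have hnkey : ∀ k, Ordinal.lift.{1} (b (k + 1)) ≤ ot (A ∩ blk b (nseq k)) := by
      intro k
      match k with
      | 0 => exact hspec0.2
      | k + 1 => exact (hspecS k).2
    refine ⟨Set.range nseq, Set.infinite_range_of_injective hnmono.injective, ?_⟩
    intro M hM hMS
    by_contra hc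
    obtain ⟨y, hyΛ, heq⟩ := Ordinal.lt_lift_iff.1 (not_le.1 hc)
    obtain ⟨m, hym⟩ := hcofb y hyΛ
    have hK : (nseq ⁻¹' M).Infinite := hM.preimage hMS
    obtain ⟨k, hkK, hmk⟩ := hK.exists_gt m
    have h2 : Ordinal.lift.{1} (b (k + 1)) ≤ ot (⋃ n, famOf (fun i => A ∩ blk b i) M n) := by
      have he : famOf (fun i => A ∩ blk b i) M (nseq k) = A ∩ blk b (nseq k) :=
        famOf_of_mem _ hkK
      calc Ordinal.lift.{1} (b (k + 1)) ≤ ot (A ∩ blk b (nseq k)) := hnkey k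
        _ = ot (famOf (fun i => A ∩ blk b i) M (nseq k)) := by rw [he]
        _ ≤ ot (⋃ n, famOf (fun i => A ∩ blk b i) M n) :=
            ot_mono (Set.subset_iUnion (famOf (fun i => A ∩ blk b i) M) (nseq k))
    rw [← heq] at h2
    have h3 : Ordinal.lift.{1} y < Ordinal.lift.{1} (b (k + 1)) :=
      Ordinal.lift_lt.2 (lt_of_lt_of_le hym (hmono.monotone (show m ≤ k + 1 by omega)))
    exact absurd h2 (not_le.2 h3)

end Cof


/-- If `δ > 0` is a successor ordinal or `cf(δ) = ω`, then there is a complete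
embedding of `⟨[ω]^ω, ⊆*⟩` (infinite sets of naturals under almost-inclusion) into
`⟨P(ω^δ), ⊆_I⟩`. -/
theorem stmt18 (δ : Ordinal.{0}) (hδ : 0 < δ)
    (hcase : (∃ β : Ordinal, δ = β + 1) ∨ δ.cof = ℵ₀) :
    ∃ f : Set ℕ → Set Ordinal.{0},
      -- f maps [ω]^ω into P(ω^δ)
      (∀ S : Set ℕ, S.Infinite → f S ∈ Copies (ω ^ δ)) ∧
      -- (ce1)
      (∀ S T : Set ℕ, S.Infinite → T.Infinite →
        leStarNat S T → leI (ω ^ δ) (f S) (f T)) ∧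
      -- (ce2)
      (∀ S T : Set ℕ, S.Infinite → T.Infinite →
        ((¬ ∃ R : Set ℕ, R.Infinite ∧ leStarNat R S ∧ leStarNat R T) ↔
          ¬ ∃ D ∈ Copies (ω ^ δ), leI (ω ^ δ) D (f S) ∧ leI (ω ^ δ) D (f T))) ∧
      -- (ce3)
      (∀ A ∈ Copies (ω ^ δ), ∃ S : Set ℕ, S.Infinite ∧
        ∀ S' : Set ℕ, S'.Infinite → leStarNat S' S →
          ∃ D ∈ Copies (ω ^ δ), leI (ω ^ δ) D (f S') ∧ leI (ω ^ δ) D A) := by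
  rcases hcase with ⟨β, rfl⟩ | hcof
  · exact case_succ β
  · exact case_cof δ hδ hcof
end
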